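/- arXiv:1905.12263 — 16 statements merged into one kernel-verified Lean document; each statement's English description precedes it below -/
import Mathlib

section
/- Let (Λ, |·|, d, n, B) be a generalized binomial coefficient system and let p_t^+ be the associated birth kernel. Then p_0^+(α,β) = 1 if α = β and p_0^+(α,β) = 0 if α ≠ β, and for all α,β ∈ Λ and all t ≥ 0 the map t ↦ p_t^+(α,β) is differentiable with derivative (d/dt) p_t^+(α,β) = ∑_{λ : |λ| = |β|−1} B(β,λ)·(d_β/d_λ)·p_t^+(α,λ) − (n + |β|)·p_t^+(α,β) (the sum is finite; it is empty when |β| = 0). -/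
open scoped Classical

/-- A generalized binomial coefficient system: a type `Λ` with a degree map having finite
fibers, positive dimensions `d`, a positive integer `n`, and nonnegative generalized binomial
coefficients `B` satisfying the vanishing, diagonal and convolution (Benson–Ratcliff) laws. -/
structure GBCS where
  Λ : Type
  deg : Λ → ℕ
  finite_fiber : ∀ m : ℕ, {x : Λ | deg x = m}.Finite
  d : Λ → ℝ
  d_pos : ∀ x, 0 < d x
  n : ℕ
  n_pos : 0 < n
  B : Λ → Λ → ℝ
  B_nonneg : ∀ α β, 0 ≤ B α β
  B_vanish : ∀ α β, deg α < deg β → B α β = 0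
  B_diag : ∀ α β, deg α = deg β → B α β = if α = β then 1 else 0
  B_conv : ∀ α β, deg α ≤ deg β → ∀ l : ℕ, deg α ≤ l → l ≤ deg β →
    (∑ᶠ x ∈ {x : Λ | deg x = l}, B β x * B x α)
      = ((Nat.factorial (deg β - deg α) : ℝ) /
          ((Nat.factorial (deg β - l) : ℝ) * (Nat.factorial (l - deg α) : ℝ))) * B β α

/-- The birth kernel associated with a generalized binomial coefficient system. -/
noncomputable def birthKernel (S : GBCS) (t : ℝ) (α β : S.Λ) : ℝ :=
  if S.deg α ≤ S.deg β then
    S.B β α * (S.d β / S.d α) * (1 - Real.exp (-t)) ^ (S.deg β - S.deg α) *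
      Real.exp (-t * ((S.deg α : ℝ) + S.n))
  else 0

/-- The death kernel associated with a generalized binomial coefficient system. -/
noncomputable def deathKernel (S : GBCS) (t : ℝ) (α β : S.Λ) : ℝ :=
  if S.deg β ≤ S.deg α then
    S.B α β * Real.exp (-(S.deg β : ℝ) * t) * (1 - Real.exp (-t)) ^ (S.deg α - S.deg β)
  else 0

/-- initial condition and Kolmogorov forward equation for the birth kernel. -/
theorem birthKernel_initial_and_deriv (S : GBCS) (α β : S.Λ) :
    (birthKernel S 0 α β = if α = β then 1 else 0) ∧
    (∀ t : ℝ, 0 ≤ t →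
      HasDerivAt (fun s => birthKernel S s α β)
        ((∑ᶠ l ∈ {x : S.Λ | S.deg x + 1 = S.deg β},
            S.B β l * (S.d β / S.d l) * birthKernel S t α l)
          - ((S.n : ℝ) + (S.deg β : ℝ)) * birthKernel S t α β) t) := by
  constructor
  · -- initial condition
    unfold birthKernel
    by_cases hab : S.deg α ≤ S.deg β
    · rw [if_pos hab]
      rcases eq_or_lt_of_le hab with heq | hlt
      · have hk : S.deg β - S.deg α = 0 := by omega
        rw [hk]
        have hB := S.B_diag β α heq.symm
        by_cases h : α = β
        · subst h
          simp [hB, div_self (ne_of_gt (S.d_pos α))]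
        · have : β ≠ α := fun hc => h hc.symm
          simp [hB, this, h]
      · have hk : 0 < S.deg β - S.deg α := by omega
        have h : α ≠ β := by rintro rfl; omega
        simp [h]
        exact Or.inr (by omega)
    · rw [if_neg hab]
      have h : α ≠ β := by rintro rfl; omega
      simp [h]
  · intro t _
    by_cases hab : S.deg α ≤ S.deg β
    · -- main case
      set a := S.deg α with ha
      set b := S.deg β with hb
      set k := b - a with hk
      set c := S.B β α * (S.d β / S.d α) with hc
      set m := (a : ℝ) + S.n with hm
      have hfun : (fun s => birthKernel S s α β)
          = fun s => c * ((1 - Real.exp (-s)) ^ k * Real.exp (-s * m)) := by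
        funext s
        unfold birthKernel
        rw [if_pos hab]
        ring
      -- derivative of the explicit function
      have h1 : HasDerivAt (fun s : ℝ => Real.exp (-s)) (-Real.exp (-t)) t := by
        simpa using ((hasDerivAt_neg t).exp)
      have h2 : HasDerivAt (fun s : ℝ => 1 - Real.exp (-s)) (Real.exp (-t)) t := by
        simpa using (h1.const_sub (1 : ℝ))
      have h3 := h2.fun_pow k
      have h4 : HasDerivAt (fun s : ℝ => Real.exp (-s * m)) (-m * Real.exp (-t * m)) t := by
        have := (((hasDerivAt_id t).neg).mul_const m).exp
        simpa [mul_comm] using this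
      have h5 := (h3.fun_mul h4).const_mul c
      rw [hfun]
      refine h5.congr_deriv ?_
      symm
      -- now identify the stated derivative with the computed one
      -- compute the sum
      have hsum : (∑ᶠ l ∈ {x : S.Λ | S.deg x + 1 = b},
            S.B β l * (S.d β / S.d l) * birthKernel S t α l)
          = c * (k : ℝ) * (1 - Real.exp (-t)) ^ (k - 1) * Real.exp (-t * m) := by
        rcases eq_or_lt_of_le hab with heq | hlt
        · -- a = b : sum is zero since every l in the set has deg l < a
          have hz : ∀ l ∈ {x : S.Λ | S.deg x + 1 = b},
              S.B β l * (S.d β / S.d l) * birthKernel S t α l = 0 := by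
            intro l hl
            have : ¬ a ≤ S.deg l := by
              simp only [Set.mem_setOf_eq] at hl; omega
            unfold birthKernel
            rw [if_neg this]; ring
          rw [finsum_mem_of_eqOn_zero hz]
          have : k = 0 := by omega
          simp [this]
        · -- a < b
          have hb1 : a ≤ b - 1 := by omega
          have hset : {x : S.Λ | S.deg x + 1 = b} = {x : S.Λ | S.deg x = b - 1} := by
            ext x; simp only [Set.mem_setOf_eq]; omega
          have hterm : ∀ l ∈ {x : S.Λ | S.deg x = b - 1},
              S.B β l * (S.d β / S.d l) * birthKernel S t α l
                = (S.B β l * S.B l α) * ((S.d β / S.d α) *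
                    (1 - Real.exp (-t)) ^ (k - 1) * Real.exp (-t * m)) := by
            intro l hl
            have hdl : S.deg l = b - 1 := hl
            have hal : a ≤ S.deg l := by omega
            unfold birthKernel
            rw [if_pos hal]
            have hpow : S.deg l - a = k - 1 := by omega
            rw [hpow]
            simp only [← ha]
            have hd1 : S.d l ≠ 0 := (S.d_pos l).ne'
            have hd2 : S.d α ≠ 0 := (S.d_pos α).ne'
            field_simp
            ring
          rw [hset, finsum_mem_congr rfl hterm]
          have hfin := S.finite_fiber (b - 1)
          rw [finsum_mem_eq_finite_toFinset_sum _ hfin, ← Finset.sum_mul,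
            ← finsum_mem_eq_finite_toFinset_sum _ hfin]
          have hconv := S.B_conv α β hab (b - 1) hb1 (by omega)
          have hfac1 : b - (b - 1) = 1 := by omega
          have hfac2 : (b - 1) - a = k - 1 := by omega
          rw [hfac1, hfac2] at hconv
          have hkk : k = (k - 1) + 1 := by omega
          have hcast : (k : ℝ) = ((k - 1 : ℕ) : ℝ) + 1 := by exact_mod_cast hkk
          have hfac : ((Nat.factorial k : ℝ)) = (k : ℝ) * (Nat.factorial (k - 1) : ℝ) := by
            rw [hkk, Nat.factorial_succ]
            push_cast
            ring
          have hne : (Nat.factorial (k - 1) : ℝ) ≠ 0 := by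
            exact_mod_cast (Nat.factorial_pos (k - 1)).ne'
          rw [hconv, hfac, Nat.factorial_one]
          field_simp
          ring
        -- end hsum
      rw [hsum]
      have hpt : birthKernel S t α β = c * ((1 - Real.exp (-t)) ^ k * Real.exp (-t * m)) := by
        unfold birthKernel; rw [if_pos hab]; ring
      rw [hpt]
      have hnb : ((S.n : ℝ) + (b : ℝ)) = m + (k : ℝ) := by
        rw [hm]; have : a + k = b := by omega
        rw [← this]; push_cast; ring
      rw [hnb]
      rcases Nat.eq_zero_or_pos k with hk0 | hkpos
      · simp [hk0]; ring
      · have hkk : k = (k - 1) + 1 := by omega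
        have hpow : (1 - Real.exp (-t)) ^ k
            = (1 - Real.exp (-t)) ^ (k - 1) * (1 - Real.exp (-t)) := by
          conv_lhs => rw [hkk, pow_succ]
        rw [hpow]
        ring
    · -- deg β < deg α : everything vanishes
      have hfun : (fun s => birthKernel S s α β) = fun _ => (0 : ℝ) := by
        funext s; unfold birthKernel; rw [if_neg hab]
      have hz : ∀ l ∈ {x : S.Λ | S.deg x + 1 = S.deg β},
          S.B β l * (S.d β / S.d l) * birthKernel S t α l = 0 := by
        intro l hl
        have : ¬ S.deg α ≤ S.deg l := by
          simp only [Set.mem_setOf_eq] at hl; omega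
        unfold birthKernel
        rw [if_neg this]; ring
      rw [finsum_mem_of_eqOn_zero hz, hfun]
      simpa [birthKernel, if_neg hab] using (hasDerivAt_const t (0 : ℝ))
end

section
/- Let (Λ, |·|, d, n, B) be a generalized binomial coefficient system and let p_t^− be the associated death kernel. Then p_0^−(α,β) = 1 if α = β and p_0^−(α,β) = 0 if α ≠ β, and for all α,β ∈ Λ and all t ≥ 0 the map t ↦ p_t^−(α,β) is differentiable with derivative (d/dt) p_t^−(α,β) = ∑_{λ : |λ| = |α|−1} B(α,λ)·p_t^−(λ,β) − |α|·p_t^−(α,β) (the sum is finite; it is empty when |α| = 0). -/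
open scoped Classical

/-- initial condition and Kolmogorov backward equation for the death kernel. -/
theorem deathKernel_initial_and_deriv (S : GBCS) (α β : S.Λ) :
    (deathKernel S 0 α β = if α = β then 1 else 0) ∧
    (∀ t : ℝ, 0 ≤ t →
      HasDerivAt (fun s => deathKernel S s α β)
        ((∑ᶠ l ∈ {x : S.Λ | S.deg x + 1 = S.deg α},
            S.B α l * deathKernel S t l β)
          - (S.deg α : ℝ) * deathKernel S t α β) t) := by
  constructor
  · unfold deathKernel
    by_cases h : S.deg β ≤ S.deg α
    · rw [if_pos h]
      by_cases he : S.deg α = S.deg β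
      · have h0 : S.deg α - S.deg β = 0 := by omega
        rw [S.B_diag α β he, h0]
        simp
      · have h2 : α ≠ β := by rintro rfl; exact he rfl
        rw [if_neg h2]
        simp [Real.exp_zero, zero_pow (show S.deg α - S.deg β ≠ 0 by omega)]
    · have h2 : α ≠ β := by rintro rfl; exact h le_rfl
      rw [if_neg h, if_neg h2]
  · intro t _
    by_cases hba : S.deg β ≤ S.deg α
    · -- function equals explicit formula
      have hfun : (fun s => deathKernel S s α β) =
          fun s => S.B α β * Real.exp (-(S.deg β : ℝ) * s) *
            (1 - Real.exp (-s)) ^ (S.deg α - S.deg β) := by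
        funext s; unfold deathKernel; rw [if_pos hba]
      rw [hfun]
      set b := S.deg β with hb
      set a := S.deg α with ha
      set C := S.B α β with hC
      have hexp : HasDerivAt (fun s : ℝ => Real.exp (-(b : ℝ) * s))
          (Real.exp (-(b : ℝ) * t) * (-(b : ℝ) * 1)) t :=
        ((hasDerivAt_id t).const_mul (-(b : ℝ))).exp
      have hinner : HasDerivAt (fun s : ℝ => 1 - Real.exp (-s))
          (-(Real.exp (-t) * (-1 : ℝ))) t :=
        ((hasDerivAt_id t).neg.exp).const_sub 1
      by_cases heq : b = a
      · -- degrees equal: pow exponent is 0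
        have h0 : a - b = 0 := by omega
        have hsum : (∑ᶠ l ∈ {x : S.Λ | S.deg x + 1 = S.deg α},
            S.B α l * deathKernel S t l β) = 0 := by
          apply finsum_mem_of_eqOn_zero
          intro l hl
          have hl' : S.deg l + 1 = a := hl
          have : ¬ (S.deg β ≤ S.deg l) := by omega
          simp only [deathKernel, if_neg this, mul_zero, Pi.zero_apply]
        rw [hsum]
        have hfun2 : (fun s : ℝ => C * Real.exp (-(b : ℝ) * s) *
            (1 - Real.exp (-s)) ^ (a - b)) = fun s : ℝ => C * Real.exp (-(b : ℝ) * s) := by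
          funext s; rw [h0, pow_zero, mul_one]
        rw [hfun2]
        refine HasDerivAt.congr_deriv (hexp.const_mul C) ?_
        unfold deathKernel
        rw [if_pos hba, ← hb, ← ha, ← hC, h0, pow_zero, heq]
        ring
      · -- b < a
        have hblt : b < a := lt_of_le_of_ne hba heq
        set k := a - b - 1 with hk
        have hab : a = b + k + 1 := by omega
        have hm : a - b = k + 1 := by omega
        -- the convolution identity
        have hconv := S.B_conv β α hba (a - 1) (by omega) (by omega)
        have hd1 : a - (a - 1) = 1 := by omega
        have hd2 : a - 1 - b = k := by omega
        rw [hd1, hd2, show a - b = k + 1 from hm] at hconv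
        have hfact : ((k + 1).factorial : ℝ) / ((Nat.factorial 1 : ℝ) * (k.factorial : ℝ))
            = (k + 1 : ℝ) := by
          rw [Nat.factorial_succ]
          have : (k.factorial : ℝ) ≠ 0 := by positivity
          push_cast
          field_simp
          simp [Nat.factorial]
        rw [hfact] at hconv
        -- compute the finsum
        have hsetfin : ({x : S.Λ | S.deg x + 1 = S.deg α} : Set S.Λ).Finite := by
          have hss : {x : S.Λ | S.deg x + 1 = S.deg α} = {x : S.Λ | S.deg x = a - 1} := by
            ext x; simp only [Set.mem_setOf_eq]; omega
          rw [hss]; exact S.finite_fiber (a - 1)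
        have hsum : (∑ᶠ l ∈ {x : S.Λ | S.deg x + 1 = S.deg α},
            S.B α l * deathKernel S t l β)
            = ((k : ℝ) + 1) * C * (Real.exp (-(b : ℝ) * t) * (1 - Real.exp (-t)) ^ k) := by
          have hstep : (∑ᶠ l ∈ {x : S.Λ | S.deg x + 1 = S.deg α},
              S.B α l * deathKernel S t l β)
              = ∑ᶠ l ∈ {x : S.Λ | S.deg x = a - 1},
                (S.B α l * S.B l β) * (Real.exp (-(b : ℝ) * t) * (1 - Real.exp (-t)) ^ k) := by
            apply finsum_mem_congr
            · ext x; simp only [Set.mem_setOf_eq]; omega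
            · intro l hl
              have hl' : S.deg l = a - 1 := hl
              have hlb : S.deg β ≤ S.deg l := by omega
              unfold deathKernel
              rw [if_pos hlb, hl', hd2]
              ring
          rw [hstep]
          have hfin : ({x : S.Λ | S.deg x = a - 1} : Set S.Λ).Finite := S.finite_fiber (a - 1)
          rw [← hfin.coe_toFinset, finsum_mem_coe_finset, ← Finset.sum_mul,
              ← finsum_mem_coe_finset, hfin.coe_toFinset, hconv]
        rw [hsum]
        -- derivative computation
        have hpow : HasDerivAt (fun s : ℝ => (1 - Real.exp (-s)) ^ (k + 1))
            (((k : ℝ) + 1) * (1 - Real.exp (-t)) ^ k * (-(Real.exp (-t) * (-1 : ℝ)))) t := by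
          have := hinner.pow (k + 1)
          simpa [Pi.pow_def] using this
        have H : HasDerivAt (fun s : ℝ => C * Real.exp (-(b : ℝ) * s) *
            (1 - Real.exp (-s)) ^ (a - b))
            ((C * (Real.exp (-(b : ℝ) * t) * (-(b : ℝ) * 1))) * (1 - Real.exp (-t)) ^ (k + 1)
              + (C * Real.exp (-(b : ℝ) * t)) *
                (((k : ℝ) + 1) * (1 - Real.exp (-t)) ^ k * (-(Real.exp (-t) * (-1 : ℝ))))) t := by
          rw [hm]
          exact (hexp.const_mul C).mul hpow
        convert H using 1
        unfold deathKernel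
        rw [if_pos hba, ← hb, ← ha, ← hC, hm]
        have hacast : (a : ℝ) = (b : ℝ) + (k : ℝ) + 1 := by push_cast [hab]; ring
        rw [hacast]
        ring
    · -- deg β > deg α : kernel vanishes identically
      have hfun : (fun s => deathKernel S s α β) = fun _ : ℝ => (0 : ℝ) := by
        funext s; unfold deathKernel; rw [if_neg hba]
      have hsum : (∑ᶠ l ∈ {x : S.Λ | S.deg x + 1 = S.deg α},
          S.B α l * deathKernel S t l β) = 0 := by
        apply finsum_mem_of_eqOn_zero
        intro l hl
        have hl' : S.deg l + 1 = S.deg α := hl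
        have : ¬ (S.deg β ≤ S.deg l) := by omega
        simp only [deathKernel, if_neg this, mul_zero, Pi.zero_apply]
      have hdk : deathKernel S t α β = 0 := by unfold deathKernel; rw [if_neg hba]
      rw [hfun, hsum, hdk, mul_zero, sub_zero]
      exact hasDerivAt_const t 0
end

section
/- Let (Λ, |·|, d, n, B) be a generalized binomial coefficient system and let p_t^+ be the associated birth kernel. Then the Chapman–Kolmogorov equation holds: for all s, t ≥ 0 and all α,β ∈ Λ, ∑_{λ ∈ Λ} p_s^+(α,λ)·p_t^+(λ,β) = p_{s+t}^+(α,β), where the sum has only finitely many nonzero terms (only λ with |α| ≤ |λ| ≤ |β| contribute). -/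
open scoped Classical

private lemma factorial_ratio (N k : ℕ) (h : k ≤ N) :
    ((Nat.factorial N : ℝ) / ((Nat.factorial (N - k) : ℝ) * (Nat.factorial k : ℝ)))
      = (N.choose k : ℝ) := by
  have h1 := Nat.choose_mul_factorial_mul_factorial h
  have h2 : (Nat.factorial (N - k) : ℝ) ≠ 0 := Nat.cast_ne_zero.2 (Nat.factorial_ne_zero _)
  have h3 : (Nat.factorial k : ℝ) ≠ 0 := Nat.cast_ne_zero.2 (Nat.factorial_ne_zero _)
  field_simp
  rw [← h1]
  push_cast
  ring

/-- Chapman–Kolmogorov equation for the birth kernel. -/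
theorem birthKernel_chapman (S : GBCS) (s t : ℝ) (hs : 0 ≤ s) (ht : 0 ≤ t) (α β : S.Λ) :
    (∑ᶠ l : S.Λ, birthKernel S s α l * birthKernel S t l β)
      = birthKernel S (s + t) α β := by
  by_cases hab : S.deg α ≤ S.deg β
  · have hfin : {x : S.Λ | S.deg x ∈ Set.Icc (S.deg α) (S.deg β)}.Finite := by
      have hsub : {x : S.Λ | S.deg x ∈ Set.Icc (S.deg α) (S.deg β)}
          ⊆ ⋃ m ∈ Set.Icc (S.deg α) (S.deg β), {x : S.Λ | S.deg x = m} := by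
        intro x hx; exact Set.mem_biUnion hx rfl
      exact ((Set.finite_Icc _ _).biUnion fun m _ => S.finite_fiber m).subset hsub
    have hsupp : Function.support (fun l => birthKernel S s α l * birthKernel S t l β)
        ⊆ ↑hfin.toFinset := by
      intro l hl
      simp only [Function.mem_support] at hl
      have h1 : S.deg α ≤ S.deg l := by
        by_contra h; simp [birthKernel, h] at hl
      have h2 : S.deg l ≤ S.deg β := by
        by_contra h; simp [birthKernel, h] at hl
      simp [Set.Finite.coe_toFinset, Set.mem_Icc, h1, h2]
    rw [finsum_eq_sum_of_support_subset _ hsupp]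
    rw [← Finset.sum_fiberwise_of_maps_to (g := S.deg)
        (t := Finset.Icc (S.deg α) (S.deg β))
        (fun x hx => by
          have := (Set.Finite.mem_toFinset hfin).1 hx
          simpa [Finset.mem_Icc, Set.mem_Icc] using this) _]
    have key : ∀ m ∈ Finset.Icc (S.deg α) (S.deg β),
        (∑ l ∈ hfin.toFinset.filter (fun l => S.deg l = m),
            birthKernel S s α l * birthKernel S t l β)
          = ((S.deg β - S.deg α).choose (m - S.deg α) : ℝ) * S.B β α * (S.d β / S.d α)
              * (1 - Real.exp (-s)) ^ (m - S.deg α) * (1 - Real.exp (-t)) ^ (S.deg β - m)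
              * Real.exp (-s * ((S.deg α : ℝ) + S.n)) * Real.exp (-t * ((m : ℝ) + S.n)) := by
      intro m hm
      obtain ⟨ham, hmb⟩ := Finset.mem_Icc.1 hm
      have hfil : hfin.toFinset.filter (fun l => S.deg l = m)
          = (S.finite_fiber m).toFinset := by
        ext x
        simp only [Finset.mem_filter, Set.Finite.mem_toFinset, Set.mem_setOf_eq, Set.mem_Icc]
        constructor
        · rintro ⟨_, h⟩; exact h
        · intro h; exact ⟨by omega, h⟩
      rw [hfil]
      have hterm : ∀ l ∈ (S.finite_fiber m).toFinset,
          birthKernel S s α l * birthKernel S t l β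
            = (S.B β l * S.B l α) * ((S.d β / S.d α)
                * (1 - Real.exp (-s)) ^ (m - S.deg α) * (1 - Real.exp (-t)) ^ (S.deg β - m)
                * Real.exp (-s * ((S.deg α : ℝ) + S.n)) * Real.exp (-t * ((m : ℝ) + S.n))) := by
        intro l hl
        have hdl : S.deg l = m := by
          have := (Set.Finite.mem_toFinset _).1 hl; exact this
        have hd : S.d l ≠ 0 := (S.d_pos l).ne'
        have hdα : S.d α ≠ 0 := (S.d_pos α).ne'
        rw [birthKernel, birthKernel, hdl, if_pos ham, if_pos hmb]
        field_simp
      rw [Finset.sum_congr rfl hterm, ← Finset.sum_mul]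
      have hB : (∑ x ∈ (S.finite_fiber m).toFinset, S.B β x * S.B x α)
          = ((Nat.factorial (S.deg β - S.deg α) : ℝ) /
              ((Nat.factorial (S.deg β - m) : ℝ) * (Nat.factorial (m - S.deg α) : ℝ)))
            * S.B β α := by
        rw [← finsum_mem_coe_finset, Set.Finite.coe_toFinset]
        exact S.B_conv α β hab m ham hmb
      rw [hB]
      have h1 : S.deg β - m = (S.deg β - S.deg α) - (m - S.deg α) := by omega
      have h2 : m - S.deg α ≤ S.deg β - S.deg α := by omega
      rw [h1, factorial_ratio _ _ h2, ← h1]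
      ring
    rw [Finset.sum_congr rfl key]
    have hIcc : Finset.Icc (S.deg α) (S.deg β) = Finset.Ico (S.deg α) (S.deg β + 1) := by
      rw [Finset.Ico_add_one_right_eq_Icc]
    rw [hIcc, Finset.sum_Ico_eq_sum_range]
    have hrange : S.deg β + 1 - S.deg α = (S.deg β - S.deg α) + 1 := by omega
    rw [hrange]
    have hterm2 : ∀ k ∈ Finset.range ((S.deg β - S.deg α) + 1),
        ((S.deg β - S.deg α).choose (S.deg α + k - S.deg α) : ℝ) * S.B β α * (S.d β / S.d α)
            * (1 - Real.exp (-s)) ^ (S.deg α + k - S.deg α)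
            * (1 - Real.exp (-t)) ^ (S.deg β - (S.deg α + k))
            * Real.exp (-s * ((S.deg α : ℝ) + S.n))
            * Real.exp (-t * (((S.deg α + k : ℕ) : ℝ) + S.n))
          = (S.B β α * (S.d β / S.d α) * Real.exp (-(s + t) * ((S.deg α : ℝ) + S.n)))
            * (((1 - Real.exp (-s)) * Real.exp (-t)) ^ k
                * (1 - Real.exp (-t)) ^ ((S.deg β - S.deg α) - k)
                * ((S.deg β - S.deg α).choose k : ℝ)) := by
      intro k hk
      have hk' : k ≤ S.deg β - S.deg α := by
        have := Finset.mem_range.1 hk; omega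
      have e1 : S.deg α + k - S.deg α = k := by omega
      have e2 : S.deg β - (S.deg α + k) = (S.deg β - S.deg α) - k := by omega
      have e3 : Real.exp (-s * ((S.deg α : ℝ) + S.n))
            * Real.exp (-t * (((S.deg α + k : ℕ) : ℝ) + S.n))
          = Real.exp (-(s + t) * ((S.deg α : ℝ) + S.n)) * Real.exp (-t) ^ k := by
        rw [← Real.exp_nat_mul, ← Real.exp_add, ← Real.exp_add]
        push_cast
        ring_nf
      rw [e1, e2]
      rw [mul_assoc _ _ (Real.exp (-t * (((S.deg α + k : ℕ) : ℝ) + S.n))), e3, mul_pow]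
      ring
    rw [Finset.sum_congr rfl hterm2, ← Finset.mul_sum, ← add_pow]
    have huv : (1 - Real.exp (-s)) * Real.exp (-t) + (1 - Real.exp (-t))
        = 1 - Real.exp (-(s + t)) := by
      rw [show -(s + t) = -s + -t by ring, Real.exp_add]; ring
    rw [huv, birthKernel, if_pos hab]
    ring
  · have hz : (fun l => birthKernel S s α l * birthKernel S t l β) = fun _ => 0 := by
      funext l
      by_cases h1 : S.deg α ≤ S.deg l
      · have h2 : ¬ S.deg l ≤ S.deg β := fun h => hab (h1.trans h)
        simp [birthKernel, h2]
      · simp [birthKernel, h1]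
    rw [hz, finsum_zero, birthKernel, if_neg hab]
end

section
/- Let (Λ, |·|, d, n, B) be a generalized binomial coefficient system and let p_t^− be the associated death kernel. Then the Chapman–Kolmogorov equation holds: for all s, t ≥ 0 and all α,β ∈ Λ, ∑_{λ ∈ Λ} p_s^−(α,λ)·p_t^−(λ,β) = p_{s+t}^−(α,β), where the sum has only finitely many nonzero terms (only λ with |β| ≤ |λ| ≤ |α| contribute). -/
open scoped Classical

private lemma key_binom (s t : ℝ) (m : ℕ) :
    ∑ k ∈ Finset.range (m + 1),
      (Real.exp (-s) * (1 - Real.exp (-t))) ^ k * (1 - Real.exp (-s)) ^ (m - k) *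
        (m.choose k : ℝ)
      = (1 - Real.exp (-(s + t))) ^ m := by
  rw [← add_pow]
  congr 1
  rw [neg_add, Real.exp_add]
  ring
private lemma deathKernel_chapman_aux (S : GBCS) (s t : ℝ) (α β : S.Λ)
    (hba : S.deg β ≤ S.deg α) :
    (∑ᶠ l : S.Λ, deathKernel S s α l * deathKernel S t l β)
      = deathKernel S (s + t) α β := by
  classical
  set a := S.deg α with ha
  set b := S.deg β with hb
  set Fib : ℕ → Finset S.Λ := fun l => (S.finite_fiber l).toFinset with hFib
  set T : Finset S.Λ := (Finset.Icc b a).biUnion Fib with hT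
  have hmemFib : ∀ l x, x ∈ Fib l ↔ S.deg x = l := by
    intro l x; simp [hFib, Set.Finite.mem_toFinset]
  have hsupp : Function.support (fun l => deathKernel S s α l * deathKernel S t l β) ⊆ ↑T := by
    intro y hy
    simp only [Function.mem_support] at hy
    unfold deathKernel at hy
    by_cases h1 : S.deg y ≤ a
    · by_cases h2 : b ≤ S.deg y
      · rw [Finset.mem_coe, hT, Finset.mem_biUnion]
        exact ⟨S.deg y, Finset.mem_Icc.2 ⟨h2, h1⟩, (hmemFib _ _).2 rfl⟩
      · simp [h1, h2] at hy; exact absurd hy.1 (by omega)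
    · simp [h1] at hy; exact absurd hy.2.1 (by omega)
  rw [finsum_eq_sum_of_support_subset _ hsupp]
  rw [Finset.sum_biUnion]
  · -- main computation
    have hstep : ∀ l ∈ Finset.Icc b a,
        ∑ x ∈ Fib l, deathKernel S s α x * deathKernel S t x β
          = ((a - b).choose (l - b) : ℝ) * S.B α β *
              (Real.exp (-(l : ℝ) * s) * (1 - Real.exp (-s)) ^ (a - l) *
                (Real.exp (-(b : ℝ) * t) * (1 - Real.exp (-t)) ^ (l - b))) := by
      intro l hl
      rw [Finset.mem_Icc] at hl
      have hsum : ∀ x ∈ Fib l, deathKernel S s α x * deathKernel S t x β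
          = (S.B α x * S.B x β) *
              (Real.exp (-(l : ℝ) * s) * (1 - Real.exp (-s)) ^ (a - l) *
                (Real.exp (-(b : ℝ) * t) * (1 - Real.exp (-t)) ^ (l - b))) := by
        intro x hx
        have hdx : S.deg x = l := (hmemFib _ _).1 hx
        unfold deathKernel
        rw [if_pos (by rw [hdx]; exact hl.2), if_pos (by rw [hdx]; exact hl.1), hdx]
        ring
      rw [Finset.sum_congr rfl hsum, ← Finset.sum_mul]
      have hconv := S.B_conv β α hba l hl.1 hl.2
      rw [finsum_mem_eq_finite_toFinset_sum _ (S.finite_fiber l)] at hconv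
      rw [hconv]
      congr 1
      rw [Nat.cast_choose ℝ (by omega : l - b ≤ a - b)]
      have h1 : a - b - (l - b) = a - l := by omega
      rw [h1, mul_comm ((l - b).factorial : ℝ)]
    rw [Finset.sum_congr rfl hstep]
    rw [← Finset.Ico_add_one_right_eq_Icc, Finset.sum_Ico_eq_sum_range]
    have hm : a + 1 - b = (a - b) + 1 := by omega
    rw [hm]
    have hterm : ∀ k ∈ Finset.range ((a - b) + 1),
        ((a - b).choose (b + k - b) : ℝ) * S.B α β *
          (Real.exp (-((b + k : ℕ) : ℝ) * s) * (1 - Real.exp (-s)) ^ (a - (b + k)) *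
            (Real.exp (-(b : ℝ) * t) * (1 - Real.exp (-t)) ^ (b + k - b)))
        = (S.B α β * (Real.exp (-(b : ℝ) * s) * Real.exp (-(b : ℝ) * t))) *
            ((Real.exp (-s) * (1 - Real.exp (-t))) ^ k *
              (1 - Real.exp (-s)) ^ ((a - b) - k) * ((a - b).choose k : ℝ)) := by
      intro k hk
      have h1 : b + k - b = k := by omega
      have h2 : a - (b + k) = (a - b) - k := by omega
      rw [h1, h2]
      have h3 : Real.exp (-((b + k : ℕ) : ℝ) * s) =
          Real.exp (-(b : ℝ) * s) * (Real.exp (-s)) ^ k := by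
        rw [← Real.exp_nat_mul, ← Real.exp_add]
        push_cast; ring_nf
      rw [h3, mul_pow]
      ring
    rw [Finset.sum_congr rfl hterm, ← Finset.mul_sum, key_binom]
    unfold deathKernel
    rw [if_pos hba, ← Real.exp_add]
    ring_nf
    rw [← ha, ← hb]; ring
  · -- pairwise disjoint
    intro l _ l' _ hne
    simp only [Finset.disjoint_left]
    intro x hx hx'
    exact hne (((hmemFib _ _).1 hx) ▸ ((hmemFib _ _).1 hx'))

/-- Chapman–Kolmogorov equation for the death kernel. -/
theorem deathKernel_chapman (S : GBCS) (s t : ℝ) (hs : 0 ≤ s) (ht : 0 ≤ t) (α β : S.Λ) :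
    (∑ᶠ l : S.Λ, deathKernel S s α l * deathKernel S t l β)
      = deathKernel S (s + t) α β := by
  classical
  by_cases hba : S.deg β ≤ S.deg α
  · exact deathKernel_chapman_aux S s t α β hba
  · have h0 : ∀ l, deathKernel S s α l * deathKernel S t l β = 0 := by
      intro l
      unfold deathKernel
      by_cases h1 : S.deg l ≤ S.deg α
      · by_cases h2 : S.deg β ≤ S.deg l
        · exact absurd (h2.trans h1) hba
        · simp [h1, h2]
      · simp [h1]
    rw [finsum_congr h0, finsum_zero, deathKernel, if_neg hba]
end

section
/- Let (Λ, |·|, d, n, B) be a generalized binomial coefficient system satisfying additionally (D): for every β ∈ Λ and every integer k ≥ |β|, ∑_{α : |α| = k} d_α·B(α,β) = d_β·binom(k+n−1, k−|β|). Let p_t^+ be the associated birth kernel. Then for every α ∈ Λ and every t ≥ 0, the family (p_t^+(α,β))_{β ∈ Λ} is summable with sum 1. -/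
open scoped Classical

/-- under the dimension-sum identity (D), the birth kernel is a stochastic kernel. -/
theorem birthKernel_hasSum_one (S : GBCS)
    (hD : ∀ β : S.Λ, ∀ k : ℕ, S.deg β ≤ k →
      (∑ᶠ a ∈ {x : S.Λ | S.deg x = k}, S.d a * S.B a β)
        = S.d β * (Nat.choose (k + S.n - 1) (k - S.deg β) : ℝ))
    (α : S.Λ) (t : ℝ) (ht : 0 ≤ t) :
    HasSum (fun β => birthKernel S t α β) 1 := by
  have hn := S.n_pos
  have hexp_pos : 0 < Real.exp (-t) := Real.exp_pos _
  have hexp_le : Real.exp (-t) ≤ 1 := by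
    calc Real.exp (-t) ≤ Real.exp 0 := Real.exp_le_exp.2 (by linarith)
    _ = 1 := Real.exp_zero
  have hrnn : (0:ℝ) ≤ 1 - Real.exp (-t) := by linarith
  have hrlt : (1:ℝ) - Real.exp (-t) < 1 := by linarith
  haveI fint : ∀ k : ℕ, Fintype {x : S.Λ // S.deg x = k} :=
    fun k => (S.finite_fiber k).fintype
  set m := S.deg α with hm
  set g : ℕ → ℝ := fun k =>
    if m ≤ k then ((k + S.n - 1).choose (k - m) : ℝ) * (1 - Real.exp (-t)) ^ (k - m) *
      Real.exp (-t * ((m : ℝ) + S.n)) else 0 with hgdef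
  -- fiberwise sums
  have fibsum : ∀ k : ℕ, HasSum
      (fun c : {x : S.Λ // S.deg x = k} => birthKernel S t α c.1) (g k) := by
    intro k
    have h1 : HasSum (fun c : {x : S.Λ // S.deg x = k} => birthKernel S t α c.1)
        (∑ c : {x : S.Λ // S.deg x = k}, birthKernel S t α c.1) := hasSum_fintype _
    have h2 : (∑ c : {x : S.Λ // S.deg x = k}, birthKernel S t α c.1) = g k := by
      by_cases hk : m ≤ k
      · have hterm : ∀ c : {x : S.Λ // S.deg x = k},
            birthKernel S t α c.1
              = (S.d c.1 * S.B c.1 α) * ((S.d α)⁻¹ * (1 - Real.exp (-t)) ^ (k - m) *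
                  Real.exp (-t * ((m : ℝ) + S.n))) := by
          intro c
          rw [birthKernel, if_pos (by rw [c.2]; exact hk), c.2, ← hm, div_eq_mul_inv]
          ring
        have hfin : (∑ c : {x : S.Λ // S.deg x = k}, S.d c.1 * S.B c.1 α)
            = ∑ᶠ a ∈ {x : S.Λ | S.deg x = k}, S.d a * S.B a α := by
          haveI : Fintype ↑{x : S.Λ | S.deg x = k} := (S.finite_fiber k).fintype
          rw [finsum_mem_eq_toFinset_sum]
          exact (Finset.sum_subtype (p := fun x => S.deg x = k)
            ({x : S.Λ | S.deg x = k}.toFinset)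
            (fun x => by simp only [Set.mem_toFinset, Set.mem_setOf_eq])
            (fun a => S.d a * S.B a α)).symm
        calc (∑ c : {x : S.Λ // S.deg x = k}, birthKernel S t α c.1)
            = ∑ c : {x : S.Λ // S.deg x = k}, (S.d c.1 * S.B c.1 α) *
                ((S.d α)⁻¹ * (1 - Real.exp (-t)) ^ (k - m) *
                  Real.exp (-t * ((m : ℝ) + S.n))) :=
              Finset.sum_congr rfl (fun c _ => hterm c)
          _ = (∑ c : {x : S.Λ // S.deg x = k}, S.d c.1 * S.B c.1 α) *
                ((S.d α)⁻¹ * (1 - Real.exp (-t)) ^ (k - m) *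
                  Real.exp (-t * ((m : ℝ) + S.n))) := by rw [Finset.sum_mul]
          _ = (S.d α * ((k + S.n - 1).choose (k - m) : ℝ)) *
                ((S.d α)⁻¹ * (1 - Real.exp (-t)) ^ (k - m) *
                  Real.exp (-t * ((m : ℝ) + S.n))) := by rw [hfin, hD α k hk]
          _ = g k := by
              rw [hgdef]
              simp only [if_pos hk]
              have hdα := (S.d_pos α).ne'
              field_simp
      · have hterm : ∀ c : {x : S.Λ // S.deg x = k}, birthKernel S t α c.1 = 0 := by
          intro c
          rw [birthKernel, if_neg (by rw [c.2]; exact hk)]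
        rw [Finset.sum_eq_zero (fun c _ => hterm c), hgdef]
        simp [hk]
    rwa [h2] at h1
  -- the series over degrees sums to 1
  have hEeq : Real.exp (-t) ^ (m + S.n) = Real.exp (-t * ((m : ℝ) + S.n)) := by
    rw [← Real.exp_nat_mul]
    congr 1
    push_cast
    ring
  have hgsum : HasSum g 1 := by
    have hnorm : ‖(1:ℝ) - Real.exp (-t)‖ < 1 := by
      rw [Real.norm_eq_abs, abs_of_nonneg hrnn]; exact hrlt
    have h0 := (hasSum_choose_mul_geometric_of_norm_lt_one (m + S.n - 1) hnorm).mul_right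
      (Real.exp (-t * ((m : ℝ) + S.n)))
    have hmn : m + S.n - 1 + 1 = m + S.n := by omega
    have h1 : HasSum (fun j : ℕ => g (j + m)) 1 := by
      convert h0 using 2 with j
      · rfl
      · rw [hgdef]
        simp only [if_pos (Nat.le_add_left m j), Nat.add_sub_cancel]
        have e1 : j + m + S.n - 1 = j + (m + S.n - 1) := by omega
        rw [e1, Nat.choose_symm_add]
      · rw [hmn, sub_sub_cancel, hEeq, one_div, inv_mul_cancel₀ (Real.exp_ne_zero _)]
    have h2 := (hasSum_nat_add_iff (f := g) m).1 h1
    have h3 : ∑ i ∈ Finset.range m, g i = 0 := by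
      apply Finset.sum_eq_zero
      intro i hi
      rw [hgdef]
      simp only
      rw [if_neg (by simpa using Finset.mem_range.1 hi)]
    rwa [h3, add_zero] at h2
  -- assemble via the sigma decomposition by degree
  have hnn : ∀ p : (Σ k : ℕ, {x : S.Λ // S.deg x = k}),
      0 ≤ birthKernel S t α p.2.1 := by
    intro p
    rw [birthKernel]
    split
    · have h1 := S.B_nonneg p.2.1 α
      have h2 := (S.d_pos p.2.1).le
      have h3 := (S.d_pos α)
      positivity
    · exact le_refl 0
  have hsummable : Summable
      (fun p : (Σ k : ℕ, {x : S.Λ // S.deg x = k}) => birthKernel S t α p.2.1) := by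
    apply (summable_sigma_of_nonneg hnn).2
    constructor
    · intro k; exact (fibsum k).summable
    · exact hgsum.summable.congr (fun k => ((fibsum k).tsum_eq).symm)
  obtain ⟨L, hL⟩ := hsummable
  have hgL : HasSum g L := hL.sigma fibsum
  have hL1 : L = 1 := hgL.unique hgsum
  rw [hL1] at hL
  exact ((Equiv.sigmaFiberEquiv S.deg).hasSum_iff
    (f := fun β => birthKernel S t α β) (a := 1)).1 hL
end

section
/- Let (Λ, |·|, d, n, B) be a generalized binomial coefficient system satisfying additionally (R): for every β ∈ Λ with |β| ≥ 1, ∑_{α : |α| = |β|−1} B(β,α) = |β|. Then for every m ∈ ℕ and every α ∈ Λ with |α| ≥ m, ∑_{β : |β| = m} B(α,β) = binom(|α|, m). -/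
open scoped Classical

/-- under the rate-sum identity (R), level sums of generalized binomial
coefficients are ordinary binomial coefficients. -/
theorem genbin_level_sum (S : GBCS)
    (hR : ∀ β : S.Λ, 1 ≤ S.deg β →
      (∑ᶠ a ∈ {x : S.Λ | S.deg x + 1 = S.deg β}, S.B β a) = (S.deg β : ℝ))
    (m : ℕ) (α : S.Λ) (hm : m ≤ S.deg α) :
    (∑ᶠ b ∈ {x : S.Λ | S.deg x = m}, S.B α b) = (Nat.choose (S.deg α) m : ℝ) := by
  have key : ∀ (l : ℕ) (f : S.Λ → ℝ),
      (∑ᶠ b ∈ {x : S.Λ | S.deg x = l}, f b) = ∑ b ∈ (S.finite_fiber l).toFinset, f b := by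
    intro l f
    exact finsum_mem_eq_finite_toFinset_sum f (S.finite_fiber l)
  induction' hk : S.deg α - m with k ih generalizing m α
  · have hdm : S.deg α = m := by omega
    rw [key]
    have : ∀ b ∈ (S.finite_fiber m).toFinset, S.B α b = if α = b then 1 else 0 := by
      intro b hb
      exact S.B_diag α b (by rw [hdm]; exact ((S.finite_fiber m).mem_toFinset.mp hb).symm)
    rw [Finset.sum_congr rfl this, Finset.sum_ite_eq]
    simp [Set.Finite.mem_toFinset, hdm, Nat.choose_self]
  · have hm1 : m + 1 ≤ S.deg α := by omega
    have ihα : ∑ b ∈ (S.finite_fiber (m+1)).toFinset, S.B α b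
        = (Nat.choose (S.deg α) (m+1) : ℝ) := by
      rw [← key]; exact ih (m+1) α hm1 (by omega)
    -- the double sum, computed two ways
    have h1 : (∑ x ∈ (S.finite_fiber (m+1)).toFinset,
        S.B α x * ∑ b ∈ (S.finite_fiber m).toFinset, S.B x b)
        = ((m:ℝ)+1) * (Nat.choose (S.deg α) (m+1) : ℝ) := by
      have inner : ∀ x ∈ (S.finite_fiber (m+1)).toFinset,
          S.B α x * ∑ b ∈ (S.finite_fiber m).toFinset, S.B x b = S.B α x * ((m:ℝ)+1) := by
        intro x hx
        have hdx : S.deg x = m + 1 := (S.finite_fiber (m+1)).mem_toFinset.mp hx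
        have hRx := hR x (by omega)
        have hset : {a : S.Λ | S.deg a + 1 = S.deg x} = {a : S.Λ | S.deg a = m} := by
          ext a; simp only [Set.mem_setOf_eq, hdx]; omega
        rw [hset, key] at hRx
        rw [hRx, hdx]; push_cast; ring
      rw [Finset.sum_congr rfl inner, ← Finset.sum_mul, ihα]; ring
    have h2 : (∑ x ∈ (S.finite_fiber (m+1)).toFinset,
        S.B α x * ∑ b ∈ (S.finite_fiber m).toFinset, S.B x b)
        = ((k:ℝ)+1) * ∑ b ∈ (S.finite_fiber m).toFinset, S.B α b := by
      simp_rw [Finset.mul_sum]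
      rw [Finset.sum_comm]
      have inner : ∀ b ∈ (S.finite_fiber m).toFinset,
          (∑ x ∈ (S.finite_fiber (m+1)).toFinset, S.B α x * S.B x b)
          = ((k:ℝ)+1) * S.B α b := by
        intro b hb
        have hdb : S.deg b = m := (S.finite_fiber m).mem_toFinset.mp hb
        have hconv := S.B_conv b α (by omega) (m+1) (by omega) (by omega)
        rw [key] at hconv
        rw [hdb] at hconv
        rw [hconv]
        have e1 : S.deg α - m = k + 1 := hk
        have e2 : S.deg α - (m+1) = k := by omega
        have e3 : m + 1 - m = 1 := by omega
        rw [e1, e2, e3, Nat.factorial_succ, Nat.factorial_one]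
        have hkf : ((Nat.factorial k : ℝ)) ≠ 0 := by positivity
        push_cast
        field_simp
      rw [Finset.sum_congr rfl inner, ← Finset.mul_sum]
    have hchoose : ((m:ℝ)+1) * (Nat.choose (S.deg α) (m+1) : ℝ)
        = ((k:ℝ)+1) * (Nat.choose (S.deg α) m : ℝ) := by
      have := Nat.choose_succ_right_eq (S.deg α) m
      have e1 : S.deg α - m = k + 1 := hk
      rw [e1] at this
      have : (Nat.choose (S.deg α) (m+1) * (m+1) : ℕ) = (Nat.choose (S.deg α) m * (k+1) : ℕ) :=
        this
      have := congrArg (fun x : ℕ => (x : ℝ)) this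
      push_cast at this
      linarith
    rw [key]
    have hk1 : ((k:ℝ)+1) ≠ 0 := by positivity
    have := h1.symm.trans h2
    rw [hchoose] at this
    exact (mul_left_cancel₀ hk1 this).symm
end

section
/- Let (Λ, |·|, d, n, B) be a generalized binomial coefficient system satisfying additionally (R): for every β ∈ Λ with |β| ≥ 1, ∑_{α : |α| = |β|−1} B(β,α) = |β|. Let p_t^− be the associated death kernel. Then for every α ∈ Λ and every t ≥ 0, ∑_{β ∈ Λ} p_t^−(α,β) = 1 (the sum has finitely many nonzero terms, since p_t^−(α,β) = 0 unless |β| ≤ |α|). -/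
open scoped Classical

/-- under the rate-sum identity (R), the death kernel is a stochastic kernel. -/
theorem deathKernel_sum_one (S : GBCS)
    (hR : ∀ β : S.Λ, 1 ≤ S.deg β →
      (∑ᶠ a ∈ {x : S.Λ | S.deg x + 1 = S.deg β}, S.B β a) = (S.deg β : ℝ))
    (α : S.Λ) (t : ℝ) (ht : 0 ≤ t) :
    (∑ᶠ β : S.Λ, deathKernel S t α β) = 1 := by
  classical
  set m := S.deg α with hm
  set F : ℕ → Finset S.Λ := fun l => (S.finite_fiber l).toFinset with hFdef
  have hmemF : ∀ l x, x ∈ F l ↔ S.deg x = l := fun l x => (S.finite_fiber l).mem_toFinset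
  have hFcoe : ∀ l : ℕ, ((F l : Set S.Λ)) = {x : S.Λ | S.deg x = l} :=
    fun l => (S.finite_fiber l).coe_toFinset
  set Sl : ℕ → ℝ := fun l => ∑ x ∈ F l, S.B α x with hSldef
  -- the key recursion
  have hrel : ∀ l : ℕ, 1 ≤ l → l ≤ m → (l : ℝ) * Sl l = ((m - l + 1 : ℕ) : ℝ) * Sl (l - 1) := by
    intro l hl1 hlm
    have hconv : ∀ a ∈ F (l - 1),
        (∑ x ∈ F l, S.B α x * S.B x a) = ((m - l + 1 : ℕ) : ℝ) * S.B α a := by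
      intro a ha
      have hdega : S.deg a = l - 1 := (hmemF _ _).mp ha
      have h := S.B_conv a α (by omega) l (by omega) (by omega)
      rw [← hFcoe l, finsum_mem_coe_finset] at h
      rw [hdega] at h
      have hcoef : ((Nat.factorial (m - (l - 1)) : ℝ) /
          ((Nat.factorial (m - l) : ℝ) * (Nat.factorial (l - (l - 1)) : ℝ)))
          = ((m - l + 1 : ℕ) : ℝ) := by
        have h1 : m - (l - 1) = (m - l) + 1 := by omega
        have h2 : l - (l - 1) = 1 := by omega
        rw [h1, h2, Nat.factorial_succ, Nat.factorial_one]
        have : (Nat.factorial (m - l) : ℝ) ≠ 0 := Nat.cast_ne_zero.mpr (Nat.factorial_ne_zero _)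
        push_cast
        field_simp
      rw [hcoef] at h
      exact h
    have hsum : ∑ a ∈ F (l - 1), ∑ x ∈ F l, S.B α x * S.B x a
        = ((m - l + 1 : ℕ) : ℝ) * Sl (l - 1) := by
      rw [Finset.sum_congr rfl hconv, ← Finset.mul_sum]
    rw [Finset.sum_comm] at hsum
    have hinner : ∀ x ∈ F l, ∑ a ∈ F (l - 1), S.B α x * S.B x a = S.B α x * (l : ℝ) := by
      intro x hx
      have hdegx : S.deg x = l := (hmemF _ _).mp hx
      rw [← Finset.mul_sum]
      congr 1
      have hRx := hR x (by omega)
      have hset : {a : S.Λ | S.deg a + 1 = S.deg x} = (F (l - 1) : Set S.Λ) := by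
        rw [hFcoe]
        ext a
        simp only [Set.mem_setOf_eq, hdegx]
        omega
      rw [hset, finsum_mem_coe_finset, hdegx] at hRx
      exact hRx
    rw [Finset.sum_congr rfl hinner] at hsum
    rw [← hsum]
    show (l : ℝ) * (∑ x ∈ F l, S.B α x) = _
    rw [Finset.mul_sum]
    exact Finset.sum_congr rfl fun x _ => mul_comm _ _
  -- level sums are binomial coefficients
  have hchoose : ∀ k : ℕ, ∀ l : ℕ, l + k = m → Sl l = (m.choose l : ℝ) := by
    intro k
    induction k with
    | zero =>
      intro l hl
      have hl' : l = m := by omega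
      subst hl'
      rw [Nat.choose_self, Nat.cast_one]
      have hB : ∀ x ∈ F m, S.B α x = if α = x then 1 else 0 := by
        intro x hx
        exact S.B_diag α x (by rw [(hmemF _ _).mp hx])
      calc Sl m = ∑ x ∈ F m, (if α = x then (1:ℝ) else 0) := Finset.sum_congr rfl hB
        _ = 1 := by
            rw [Finset.sum_ite_eq (F m) α (fun _ => (1:ℝ)),
              if_pos ((hmemF m α).mpr rfl)]
    | succ k ih =>
      intro l hl
      have h1 : (l + 1) + k = m := by omega
      have hSl1 : Sl (l + 1) = (m.choose (l + 1) : ℝ) := ih (l + 1) h1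
      have hrec := hrel (l + 1) (by omega) (by omega)
      simp only [Nat.add_sub_cancel] at hrec
      rw [hSl1] at hrec
      have hml : m - (l + 1) + 1 = m - l := by omega
      rw [hml] at hrec
      have hpos : (0:ℝ) < ((m - l : ℕ) : ℝ) := by
        have : 0 < m - l := by omega
        exact_mod_cast this
      have hid : (m.choose (l + 1) : ℝ) * ((l:ℝ) + 1) = (m.choose l : ℝ) * ((m - l : ℕ) : ℝ) := by
        have := Nat.choose_succ_right_eq m l
        exact_mod_cast this
      have : ((m - l : ℕ) : ℝ) * Sl l = ((m - l : ℕ) : ℝ) * (m.choose l : ℝ) := by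
        rw [← hrec]
        push_cast
        nlinarith [hid]
      exact mul_left_cancel₀ (ne_of_gt hpos) this
  -- reduce the finsum to a finite sum over levels
  set T : Finset S.Λ := (Finset.range (m + 1)).biUnion F with hTdef
  have hsupp : Function.support (fun β => deathKernel S t α β) ⊆ (T : Set S.Λ) := by
    intro β hβ
    simp only [Function.mem_support] at hβ
    have hle : S.deg β ≤ m := by
      by_contra h
      apply hβ
      unfold deathKernel
      rw [if_neg]
      omega
    simp only [hTdef, Finset.coe_biUnion, Set.mem_iUnion, Finset.mem_coe,
      Finset.mem_range]
    exact ⟨S.deg β, by simpa using Nat.lt_succ_of_le hle, (hmemF _ _).mpr rfl⟩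
  rw [finsum_eq_finset_sum_of_support_subset _ hsupp]
  have hdisj : Set.PairwiseDisjoint ((Finset.range (m + 1)) : Set ℕ) F := by
    intro i _ j _ hij
    simp only [Function.onFun, Finset.disjoint_left]
    intro x hxi hxj
    exact hij (((hmemF _ _).mp hxi).symm.trans ((hmemF _ _).mp hxj))
  rw [hTdef, Finset.sum_biUnion hdisj]
  have hterm : ∀ l ∈ Finset.range (m + 1),
      ∑ β ∈ F l, deathKernel S t α β
        = (m.choose l : ℝ) * (Real.exp (-t)) ^ l * (1 - Real.exp (-t)) ^ (m - l) := by
    intro l hl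
    have hlm : l ≤ m := by simpa [Nat.lt_succ_iff] using hl
    have : ∀ β ∈ F l, deathKernel S t α β
        = S.B α β * (Real.exp (-t)) ^ l * (1 - Real.exp (-t)) ^ (m - l) := by
      intro β hβ
      have hdeg : S.deg β = l := (hmemF _ _).mp hβ
      unfold deathKernel
      rw [if_pos (by omega)]
      rw [hdeg]
      congr 1
      congr 1
      rw [show -(l:ℝ) * t = (l:ℝ) * (-t) by ring, Real.exp_nat_mul]
    rw [Finset.sum_congr rfl this]
    rw [← Finset.sum_mul, ← Finset.sum_mul]
    rw [show (∑ x ∈ F l, S.B α x) = Sl l from rfl, hchoose (m - l) l (by omega)]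
  rw [Finset.sum_congr rfl hterm]
  have := add_pow (Real.exp (-t)) (1 - Real.exp (-t)) m
  simp only [add_sub_cancel] at this
  calc ∑ l ∈ Finset.range (m + 1),
        (m.choose l : ℝ) * (Real.exp (-t)) ^ l * (1 - Real.exp (-t)) ^ (m - l)
      = ∑ l ∈ Finset.range (m + 1),
        (Real.exp (-t)) ^ l * (1 - Real.exp (-t)) ^ (m - l) * (m.choose l : ℝ) := by
        apply Finset.sum_congr rfl; intro l _; ring
    _ = (Real.exp (-t) + (1 - Real.exp (-t))) ^ m := (add_pow _ _ m).symm
    _ = 1 := by simp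
end

section
/- Let (Λ, |·|, d, n, B) be a generalized binomial coefficient system satisfying additionally (R): for every β ∈ Λ with |β| ≥ 1, ∑_{α : |α| = |β|−1} B(β,α) = |β|. Let p_t^− be the associated death kernel. Then for every α ∈ Λ, every integer m ≤ |α| and every t ≥ 0, ∑_{β : |β| = m} p_t^−(α,β) = binom(|α|, m)·e^{−mt}·(1−e^{−t})^{|α|−m}; in particular this sum depends on α only through |α|. -/
open scoped Classical

lemma B_level_sum (S : GBCS)
    (hR : ∀ β : S.Λ, 1 ≤ S.deg β →
      (∑ᶠ a ∈ {x : S.Λ | S.deg x + 1 = S.deg β}, S.B β a) = (S.deg β : ℝ))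
    (β : S.Λ) :
    ∀ k l : ℕ, l + k = S.deg β →
      (∑ x ∈ (S.finite_fiber l).toFinset, S.B β x) = ((S.deg β).choose l : ℝ) := by
  intro k
  induction k with
  | zero =>
    intro l hl
    simp only [Nat.add_zero] at hl
    subst hl
    rw [Nat.choose_self]
    have hmem : β ∈ (S.finite_fiber (S.deg β)).toFinset := by
      simp [Set.Finite.mem_toFinset]
    rw [Finset.sum_congr rfl (fun x hx => S.B_diag β x (by
      have := (Set.Finite.mem_toFinset _).mp hx; simp at this; omega))]
    simp [Finset.sum_ite_eq' _ β (fun _ => (1:ℝ)), hmem]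
  | succ k ih =>
    intro l hl
    have hl1 : l + 1 + k = S.deg β := by omega
    have hlt : l < S.deg β := by omega
    have hS1 : (∑ x ∈ (S.finite_fiber (l+1)).toFinset, S.B β x)
        = ((S.deg β).choose (l+1) : ℝ) := ih (l+1) hl1
    -- double sum
    have hconv : ∀ a ∈ (S.finite_fiber l).toFinset,
        (∑ x ∈ (S.finite_fiber (l+1)).toFinset, S.B β x * S.B x a)
          = ((S.deg β - l : ℕ) : ℝ) * S.B β a := by
      intro a ha
      have hda : S.deg a = l := by
        have := (Set.Finite.mem_toFinset _).mp ha; simpa using this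
      have hc := S.B_conv a β (by omega) (l+1) (by omega) (by omega)
      rw [finsum_mem_eq_finite_toFinset_sum _ (S.finite_fiber (l+1))] at hc
      rw [hc, hda]
      congr 1
      have h1 : l + 1 - l = 1 := by omega
      have h2 : S.deg β - l = (S.deg β - (l+1)) + 1 := by omega
      rw [h1, h2, Nat.factorial_succ, Nat.factorial_one]
      have hpos : (0:ℝ) < (Nat.factorial (S.deg β - (l+1)) : ℝ) := by
        exact_mod_cast Nat.factorial_pos _
      push_cast
      field_simp
    have hR' : ∀ x ∈ (S.finite_fiber (l+1)).toFinset,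
        (∑ a ∈ (S.finite_fiber l).toFinset, S.B x a) = ((l:ℝ) + 1) := by
      intro x hx
      have hdx : S.deg x = l + 1 := by
        have := (Set.Finite.mem_toFinset _).mp hx; simpa using this
      have h := hR x (by omega)
      have hset : {a : S.Λ | S.deg a + 1 = S.deg x} = {a : S.Λ | S.deg a = l} := by
        ext a; simp [hdx]
      rw [hset, finsum_mem_eq_finite_toFinset_sum _ (S.finite_fiber l), hdx] at h
      rw [h, Nat.cast_add, Nat.cast_one]
    have key : ((S.deg β - l : ℕ) : ℝ) * (∑ a ∈ (S.finite_fiber l).toFinset, S.B β a)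
        = ((l:ℝ) + 1) * ((S.deg β).choose (l+1) : ℝ) := by
      calc ((S.deg β - l : ℕ) : ℝ) * (∑ a ∈ (S.finite_fiber l).toFinset, S.B β a)
          = ∑ a ∈ (S.finite_fiber l).toFinset,
              ∑ x ∈ (S.finite_fiber (l+1)).toFinset, S.B β x * S.B x a := by
            rw [Finset.mul_sum]
            exact Finset.sum_congr rfl (fun a ha => (hconv a ha).symm)
        _ = ∑ x ∈ (S.finite_fiber (l+1)).toFinset,
              ∑ a ∈ (S.finite_fiber l).toFinset, S.B β x * S.B x a := Finset.sum_comm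
        _ = ∑ x ∈ (S.finite_fiber (l+1)).toFinset, S.B β x * ((l:ℝ)+1) := by
            refine Finset.sum_congr rfl (fun x hx => ?_)
            rw [← Finset.mul_sum, hR' x hx]
        _ = ((l:ℝ) + 1) * ((S.deg β).choose (l+1) : ℝ) := by
            rw [← Finset.sum_mul, hS1]; ring
    have hchoose : ((S.deg β).choose (l+1) : ℝ) * ((l:ℝ)+1)
        = ((S.deg β).choose l : ℝ) * ((S.deg β - l : ℕ) : ℝ) := by
      exact_mod_cast congrArg (Nat.cast (R := ℝ)) (Nat.choose_succ_right_eq (S.deg β) l)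
    have hne : ((S.deg β - l : ℕ) : ℝ) ≠ 0 := by
      have h0 : 0 < S.deg β - l := by omega
      exact_mod_cast h0.ne'
    exact mul_left_cancel₀ hne (by rw [key]; linarith [hchoose])

/-- under the rate-sum identity (R), level sums of the death kernel depend
on the starting point only through its degree. -/
theorem deathKernel_level_sum (S : GBCS)
    (hR : ∀ β : S.Λ, 1 ≤ S.deg β →
      (∑ᶠ a ∈ {x : S.Λ | S.deg x + 1 = S.deg β}, S.B β a) = (S.deg β : ℝ))
    (α : S.Λ) (m : ℕ) (hm : m ≤ S.deg α) (t : ℝ) (ht : 0 ≤ t) :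
    (∑ᶠ b ∈ {x : S.Λ | S.deg x = m}, deathKernel S t α b)
      = (Nat.choose (S.deg α) m : ℝ) * Real.exp (-(m : ℝ) * t) *
          (1 - Real.exp (-t)) ^ (S.deg α - m) := by
  rw [finsum_mem_eq_finite_toFinset_sum _ (S.finite_fiber m)]
  have hterm : ∀ b ∈ (S.finite_fiber m).toFinset,
      deathKernel S t α b
        = S.B α b * (Real.exp (-(m:ℝ) * t) * (1 - Real.exp (-t)) ^ (S.deg α - m)) := by
    intro b hb
    have hdb : S.deg b = m := by
      have := (Set.Finite.mem_toFinset _).mp hb; simpa using this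
    rw [deathKernel, if_pos (by omega), hdb, mul_assoc]
  rw [Finset.sum_congr rfl hterm, ← Finset.sum_mul,
    B_level_sum S hR α (S.deg α - m) m (by omega)]
  ring
end

section
/- Let (Λ, |·|, d, n, B) be a generalized binomial coefficient system, and suppose that for each λ ∈ Λ there are functions q_λ, p_λ : ℂⁿ → ℂ such that: p_λ(t·z) = t^{2|λ|}·p_λ(z) for all real t ≥ 0 and all z ∈ ℂⁿ; q_λ(z) = ∑_{β : |β| ≤ |λ|} (−1)^{|β|}·B(λ,β)·p_β(z) for all z; and p_λ(z) = ∑_{β : |β| ≤ |λ|} (−1)^{|β|}·B(λ,β)·q_β(z) for all z. Then for every c ≥ 0, every α ∈ Λ and every z ∈ ℂⁿ, q_α(√c·z) = ∑_{β : |β| ≤ |α|} B(α,β)·c^{|β|}·(1−c)^{|α|−|β|}·q_β(z). -/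
open scoped Classical

theorem q_sqrt_dilation' (Λ : Type) (deg : Λ → ℕ)
    (finite_fiber : ∀ m : ℕ, {x : Λ | deg x = m}.Finite)
    (B : Λ → Λ → ℝ)
    (B_vanish : ∀ α β, deg α < deg β → B α β = 0)
    (B_conv : ∀ α β, deg α ≤ deg β → ∀ l : ℕ, deg α ≤ l → l ≤ deg β →
      (∑ᶠ x ∈ {x : Λ | deg x = l}, B β x * B x α)
        = ((Nat.factorial (deg β - deg α) : ℝ) /
            ((Nat.factorial (deg β - l) : ℝ) * (Nat.factorial (l - deg α) : ℝ))) * B β α)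
    (n : ℕ) (q p : Λ → (Fin n → ℂ) → ℂ)
    (hhom : ∀ l : Λ, ∀ t : ℝ, 0 ≤ t → ∀ z : Fin n → ℂ,
      p l ((t : ℂ) • z) = (t : ℂ) ^ (2 * deg l) * p l z)
    (hq : ∀ l : Λ, ∀ z : Fin n → ℂ,
      q l z = ∑ᶠ b ∈ {x : Λ | deg x ≤ deg l},
        (-1 : ℂ) ^ (deg b) * (B l b : ℂ) * p b z)
    (hp : ∀ l : Λ, ∀ z : Fin n → ℂ,
      p l z = ∑ᶠ b ∈ {x : Λ | deg x ≤ deg l},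
        (-1 : ℂ) ^ (deg b) * (B l b : ℂ) * q b z)
    (c : ℝ) (hc : 0 ≤ c) (α : Λ) (z : Fin n → ℂ) :
    q α ((Real.sqrt c : ℂ) • z)
      = ∑ᶠ b ∈ {x : Λ | deg x ≤ deg α},
          (B α b : ℂ) * (c : ℂ) ^ (deg b) * ((1 : ℂ) - (c : ℂ)) ^ (deg α - deg b) *
            q b z := by
  classical
  set m := deg α with hm
  have hfin : ∀ N : ℕ, {x : Λ | deg x ≤ N}.Finite := fun N => by
    refine ((Set.finite_Iic N).biUnion fun k _ => finite_fiber k).subset ?_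
    intro x hx
    simp only [Set.mem_iUnion]
    exact ⟨deg x, hx, rfl⟩
  set T : ℕ → Finset Λ := fun N => (hfin N).toFinset with hT
  have hmemT : ∀ N x, x ∈ T N ↔ deg x ≤ N := fun N x => (hfin N).mem_toFinset
  set F : ℕ → Finset Λ := fun l => (finite_fiber l).toFinset with hF
  have hmemF : ∀ l x, x ∈ F l ↔ deg x = l := fun l x => (finite_fiber l).mem_toFinset
  have hsumT : ∀ (g : Λ → ℂ) (N : ℕ),
      (∑ᶠ b ∈ {x : Λ | deg x ≤ N}, g b) = ∑ b ∈ T N, g b := fun g N =>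
    finsum_mem_eq_finite_toFinset_sum g (hfin N)
  have hsumF : ∀ (g : Λ → ℝ) (l : ℕ),
      (∑ᶠ b ∈ {x : Λ | deg x = l}, g b) = ∑ b ∈ F l, g b := fun g l =>
    finsum_mem_eq_finite_toFinset_sum g (finite_fiber l)
  have hsq : ∀ k : ℕ, ((Real.sqrt c : ℂ)) ^ (2 * k) = (c : ℂ) ^ k := by
    intro k
    rw [pow_mul, ← Complex.ofReal_pow, Real.sq_sqrt hc]
  have hpb : ∀ b : Λ, deg b ≤ m → p b ((Real.sqrt c : ℂ) • z)
      = ∑ g ∈ T m, (c : ℂ) ^ (deg b) * ((-1 : ℂ) ^ (deg g) * (B b g : ℂ) * q g z) := by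
    intro b hb
    rw [hhom b _ (Real.sqrt_nonneg c), hsq, hp b, hsumT _ (deg b)]
    have hsub : T (deg b) ⊆ T m := fun x hx => by
      rw [hmemT] at hx ⊢
      exact hx.trans hb
    rw [← Finset.sum_subset hsub (fun x _ hx' => by
      have h1 : ¬ deg x ≤ deg b := fun h => hx' ((hmemT _ x).2 h)
      rw [B_vanish b x (by omega)]
      push_cast
      ring)]
    rw [Finset.mul_sum]
  have step1 : q α ((Real.sqrt c : ℂ) • z)
      = ∑ b ∈ T m, ∑ g ∈ T m,
          (-1 : ℂ) ^ (deg b) * (B α b : ℂ) * (c : ℂ) ^ (deg b) *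
            ((-1 : ℂ) ^ (deg g) * (B b g : ℂ) * q g z) := by
    rw [hq α, hsumT]
    refine Finset.sum_congr rfl fun b hb => ?_
    rw [hpb b ((hmemT m b).1 hb), Finset.mul_sum]
    exact Finset.sum_congr rfl fun g hg => by ring
  rw [step1, Finset.sum_comm, hsumT]
  refine Finset.sum_congr rfl fun g hg => ?_
  have hg' : deg g ≤ m := (hmemT m g).1 hg
  set k := deg g with hk
  have hterm : ∀ b ∈ T m,
      (-1 : ℂ) ^ (deg b) * (B α b : ℂ) * (c : ℂ) ^ (deg b) *
        ((-1 : ℂ) ^ k * (B b g : ℂ) * q g z)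
      = ((-1 : ℂ) ^ (deg b) * (B α b : ℂ) * (c : ℂ) ^ (deg b) *
          ((-1 : ℂ) ^ k * (B b g : ℂ))) * q g z := fun b _ => by ring
  rw [Finset.sum_congr rfl hterm, ← Finset.sum_mul]
  have key : (∑ b ∈ T m, (-1 : ℂ) ^ (deg b) * (B α b : ℂ) * (c : ℂ) ^ (deg b) *
        ((-1 : ℂ) ^ k * (B b g : ℂ)))
      = (B α g : ℂ) * (c : ℂ) ^ k * ((1 : ℂ) - (c : ℂ)) ^ (m - k) := by
    have hpart : T m = (Finset.range (m + 1)).biUnion (fun l => F l) := by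
      ext x
      simp only [Finset.mem_biUnion, Finset.mem_range, hmemT, hmemF]
      constructor
      · intro h
        exact ⟨deg x, by omega, rfl⟩
      · rintro ⟨l, hl, rfl⟩
        omega
    rw [hpart, Finset.sum_biUnion (fun i _ j _ hij => by
      simp only [Finset.disjoint_left, hmemF]
      intro a ha ha'
      exact hij (ha ▸ ha'))]
    have hinner : ∀ l ∈ Finset.range (m + 1),
        (∑ b ∈ F l, (-1 : ℂ) ^ (deg b) * (B α b : ℂ) * (c : ℂ) ^ (deg b) *
          ((-1 : ℂ) ^ k * (B b g : ℂ)))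
        = if k ≤ l then
            (((m - k).choose (l - k) : ℂ)) * (B α g : ℂ) * ((-1 : ℂ) ^ (l + k) * (c : ℂ) ^ l)
          else 0 := by
      intro l hl
      rw [Finset.mem_range] at hl
      have hrw : ∀ b ∈ F l, (-1 : ℂ) ^ (deg b) * (B α b : ℂ) * (c : ℂ) ^ (deg b) *
          ((-1 : ℂ) ^ k * (B b g : ℂ))
          = ((-1 : ℂ) ^ (l + k) * (c : ℂ) ^ l) * ((B α b * B b g : ℝ) : ℂ) := by
        intro b hb
        rw [(hmemF l b).1 hb]
        push_cast
        ring
      rw [Finset.sum_congr rfl hrw, ← Finset.mul_sum]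
      by_cases hkl : k ≤ l
      · have hconv := B_conv g α hg' l hkl (by omega)
        rw [hsumF] at hconv
        have hc2 : (∑ b ∈ F l, ((B α b * B b g : ℝ) : ℂ))
            = ((((m - k).factorial : ℝ) /
                (((m - l).factorial : ℝ) * ((l - k).factorial : ℝ))) * B α g : ℝ) := by
          rw [← Complex.ofReal_sum]
          exact congrArg Complex.ofReal hconv
        have hch : (((m - k).choose (l - k) : ℝ))
            = ((m - k).factorial : ℝ) / (((m - l).factorial : ℝ) * ((l - k).factorial : ℝ)) := by
          rw [Nat.cast_choose ℝ (by omega : l - k ≤ m - k)]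
          have h3 : m - k - (l - k) = m - l := by omega
          rw [h3, mul_comm]
        rw [hc2, if_pos hkl]
        push_cast [hch]
        have hf1 : ((m - l).factorial : ℂ) ≠ 0 := by
          exact_mod_cast (Nat.factorial_ne_zero (m - l))
        have hf2 : ((l - k).factorial : ℂ) ≠ 0 := by
          exact_mod_cast (Nat.factorial_ne_zero (l - k))
        have hnat : (m - k).choose (l - k) * (l - k).factorial * (m - l).factorial
            = (m - k).factorial := by
          have h4 := Nat.choose_mul_factorial_mul_factorial (show l - k ≤ m - k by omega)
          have h5 : m - k - (l - k) = m - l := by omega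
          rw [h5] at h4
          exact h4
        have hCfac : ((m - k).factorial : ℂ)
            = ((m - k).choose (l - k) : ℂ) * ((l - k).factorial : ℂ) * ((m - l).factorial : ℂ) := by
          exact_mod_cast hnat.symm
        field_simp
        rw [hCfac]
        ring
      · rw [if_neg hkl]
        have hz : (∑ b ∈ F l, ((B α b * B b g : ℝ) : ℂ)) = 0 := by
          refine Finset.sum_eq_zero fun b hb => ?_
          rw [B_vanish b g (by rw [(hmemF l b).1 hb]; omega)]
          push_cast
          ring
        rw [hz, mul_zero]
    rw [Finset.sum_congr rfl hinner, ← Finset.sum_filter]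
    have hfilt : (Finset.range (m + 1)).filter (fun l => k ≤ l) = Finset.Ico k (m + 1) := by
      ext l
      simp [Finset.mem_filter, Finset.mem_Ico, Finset.mem_range]
      omega
    rw [hfilt, Finset.sum_Ico_eq_sum_range]
    have hmk : m + 1 - k = (m - k) + 1 := by omega
    rw [hmk]
    have hterm2 : ∀ j ∈ Finset.range ((m - k) + 1),
        (((m - k).choose (k + j - k) : ℂ)) * (B α g : ℂ) *
          ((-1 : ℂ) ^ (k + j + k) * (c : ℂ) ^ (k + j))
        = ((B α g : ℂ) * (c : ℂ) ^ k) *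
            ((-(c : ℂ)) ^ j * (1 : ℂ) ^ ((m - k) - j) * ((m - k).choose j : ℂ)) := by
      intro j hj
      have h1 : k + j - k = j := by omega
      have h2 : k + j + k = j + 2 * k := by omega
      rw [h1, h2, pow_add, pow_mul, pow_add, neg_pow]
      ring
    rw [Finset.sum_congr rfl hterm2, ← Finset.mul_sum, ← add_pow]
    ring_nf
  rw [key]

/-- the dilation formula for the invariant polynomials `q_λ`. -/
theorem q_sqrt_dilation (S : GBCS) (q p : S.Λ → (Fin S.n → ℂ) → ℂ)
    (hhom : ∀ l : S.Λ, ∀ t : ℝ, 0 ≤ t → ∀ z : Fin S.n → ℂ,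
      p l ((t : ℂ) • z) = (t : ℂ) ^ (2 * S.deg l) * p l z)
    (hq : ∀ l : S.Λ, ∀ z : Fin S.n → ℂ,
      q l z = ∑ᶠ b ∈ {x : S.Λ | S.deg x ≤ S.deg l},
        (-1 : ℂ) ^ (S.deg b) * (S.B l b : ℂ) * p b z)
    (hp : ∀ l : S.Λ, ∀ z : Fin S.n → ℂ,
      p l z = ∑ᶠ b ∈ {x : S.Λ | S.deg x ≤ S.deg l},
        (-1 : ℂ) ^ (S.deg b) * (S.B l b : ℂ) * q b z)
    (c : ℝ) (hc : 0 ≤ c) (α : S.Λ) (z : Fin S.n → ℂ) :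
    q α ((Real.sqrt c : ℂ) • z)
      = ∑ᶠ b ∈ {x : S.Λ | S.deg x ≤ S.deg α},
          (S.B α b : ℂ) * (c : ℂ) ^ (S.deg b) * ((1 : ℂ) - (c : ℂ)) ^ (S.deg α - S.deg b) *
            q b z := by
  exact q_sqrt_dilation' S.Λ S.deg S.finite_fiber S.B S.B_vanish S.B_conv S.n q p
    hhom hq hp c hc α z
end

section
/- Let (Λ, |·|, d, n, B) be a generalized binomial coefficient system, and suppose that for each λ ∈ Λ there are functions q_λ, p_λ : ℂⁿ → ℂ such that: each p_λ and q_λ is a polynomial function in the real and imaginary parts of the coordinates of z; each p_λ is real-valued; p_λ(t·z) = t^{2|λ|}·p_λ(z) for all real t ≥ 0 and all z; q_λ = ∑_{β : |β| ≤ |λ|} (−1)^{|β|}·B(λ,β)·p_β; p_λ = ∑_{β : |β| ≤ |λ|} (−1)^{|β|}·B(λ,β)·q_β; and ⟨q_λ, q_μ⟩₁ = 1/d_λ if λ = μ and 0 if λ ≠ μ, where ⟨f,g⟩₁ = π^{−n}·∫_{ℂⁿ} f(z)·conj(g(z))·e^{−‖z‖²} dz. Then for every c ∈ (0,1) and all λ,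 β ∈ Λ, ⟨q_λ, q_β(√(1−c)·)⟩₁ = (1/d_λ)·B(β,λ)·c^{|β|−|λ|}·(1−c)^{|λ|} (in particular this inner product vanishes when |λ| > |β|). -/
open scoped Classical

/-- A function `ℂⁿ → ℂ` which is a polynomial in the real and imaginary parts of the
coordinates. -/
def IsPolyFun (n : ℕ) (f : (Fin n → ℂ) → ℂ) : Prop :=
  ∃ P : MvPolynomial (Fin n ⊕ Fin n) ℂ, ∀ z : Fin n → ℂ,
    f z = MvPolynomial.eval
      (Sum.elim (fun j => ((z j).re : ℂ)) (fun j => ((z j).im : ℂ))) P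

/-- The Fock inner product `⟨f,g⟩₁ = π^{-n} ∫_{ℂⁿ} f(z) conj(g(z)) e^{-‖z‖²} dz`. -/
noncomputable def fockInner (n : ℕ) (f g : (Fin n → ℂ) → ℂ) : ℂ :=
  (((Real.pi : ℝ) ^ n : ℝ) : ℂ)⁻¹ *
    ∫ z : Fin n → ℂ,
      f z * (starRingEnd ℂ) (g z) *
        Complex.exp (-((∑ i, Complex.normSq (z i) : ℝ) : ℂ))

open MeasureTheory Complex Real

lemma int1d' (a : ℕ) : Integrable (fun x : ℝ => |x| ^ a * Real.exp (-x^2)) := by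
  have h := integrable_rpow_mul_exp_neg_mul_sq (b := 1) one_pos (s := (a:ℝ))
    (lt_of_lt_of_le neg_one_lt_zero (Nat.cast_nonneg a))
  have h2 := h.abs
  refine h2.congr ?_
  filter_upwards with x
  rw [abs_mul, _root_.abs_of_nonneg (Real.exp_pos _).le, Real.rpow_natCast,
    _root_.abs_pow, neg_one_mul]

lemma intC' (a b : ℕ) :
    Integrable (fun z : ℂ => |z.re| ^ a * |z.im| ^ b * Real.exp (-Complex.normSq z)) := by
  have hG : Integrable (fun p : ℝ × ℝ =>
      (|p.1| ^ a * Real.exp (-p.1^2)) * (|p.2| ^ b * Real.exp (-p.2^2))) :=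
    (int1d' a).mul_prod (int1d' b)
  have := (Complex.volume_preserving_equiv_real_prod.integrable_comp_emb
    Complex.measurableEquivRealProd.measurableEmbedding).2 hG
  refine this.congr ?_
  filter_upwards with z
  show (|z.re| ^ a * Real.exp (-z.re^2)) * (|z.im| ^ b * Real.exp (-z.im^2)) = _
  rw [Complex.normSq_apply, neg_add, Real.exp_add]
  ring

lemma intCC' (a b : ℕ) :
    Integrable (fun w : ℂ => ((w.re : ℂ)) ^ a * ((w.im : ℂ)) ^ b *
      Complex.exp (-(Complex.normSq w : ℝ))) := by
  refine (intC' a b).mono' ?_ ?_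
  · apply Continuous.aestronglyMeasurable
    have : Continuous fun w : ℂ => Complex.normSq w := Complex.continuous_normSq
    fun_prop
  · filter_upwards with w
    simp only [norm_mul, Complex.norm_exp, norm_pow, Complex.norm_real, Real.norm_eq_abs]
    simp

lemma integrable_polyGauss {n : ℕ} {f g : (Fin n → ℂ) → ℂ}
    (hf : IsPolyFun n f) (hg : IsPolyFun n g) :
    Integrable (fun z : Fin n → ℂ =>
      f z * (starRingEnd ℂ) (g z) *
        Complex.exp (-((∑ i, Complex.normSq (z i) : ℝ) : ℂ))) := by
  obtain ⟨P, hP⟩ := hf; obtain ⟨Q, hQ⟩ := hg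
  set s : (Fin n → ℂ) → (Fin n ⊕ Fin n) → ℂ :=
    fun z => Sum.elim (fun j => ((z j).re : ℂ)) (fun j => ((z j).im : ℂ)) with hsdef
  set R : MvPolynomial (Fin n ⊕ Fin n) ℂ := P * MvPolynomial.map (starRingEnd ℂ) Q with hR
  have hconj : ∀ z, (starRingEnd ℂ) (g z)
      = MvPolynomial.eval (s z) (MvPolynomial.map (starRingEnd ℂ) Q) := by
    intro z
    rw [hQ, MvPolynomial.eval_map]
    have : MvPolynomial.eval (s z) Q = MvPolynomial.eval₂ (RingHom.id ℂ) (s z) Q := rfl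
    rw [this, MvPolynomial.eval₂_comp_left (starRingEnd ℂ)]
    congr 1
    funext v
    cases v <;> simp [hsdef, Complex.conj_ofReal]
  have key : ∀ z : Fin n → ℂ, f z * (starRingEnd ℂ) (g z) = MvPolynomial.eval (s z) R := by
    intro z; rw [hP, hconj, hR, map_mul]
  have keval : ∀ z, MvPolynomial.eval (s z) R
      = ∑ d ∈ R.support, MvPolynomial.coeff d R * ∏ v : Fin n ⊕ Fin n, s z v ^ d v := by
    intro z
    rw [MvPolynomial.eval_eq]
    refine Finset.sum_congr rfl fun d _ => ?_
    congr 1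
    refine Finset.prod_subset (Finset.subset_univ _) fun v _ hv => ?_
    rw [Finsupp.notMem_support_iff.mp hv, pow_zero]
  simp_rw [key, keval, Finset.sum_mul]
  refine integrable_finset_sum _ fun d _ => ?_
  simp_rw [mul_assoc]
  refine Integrable.const_mul ?_ _
  have hfun : ∀ z : Fin n → ℂ,
      (∏ v : Fin n ⊕ Fin n, s z v ^ d v) *
        Complex.exp (-((∑ i, Complex.normSq (z i) : ℝ) : ℂ))
      = ∏ i : Fin n, (((z i).re : ℂ) ^ d (Sum.inl i) * ((z i).im : ℂ) ^ d (Sum.inr i) *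
          Complex.exp (-(Complex.normSq (z i) : ℝ))) := by
    intro z
    rw [Fintype.prod_sum_type]
    have : Complex.exp (-((∑ i, Complex.normSq (z i) : ℝ) : ℂ))
        = ∏ i : Fin n, Complex.exp (-(Complex.normSq (z i) : ℝ)) := by
      rw [← Complex.exp_sum]
      congr 1
      push_cast
      rw [neg_eq_iff_eq_neg, ← Finset.sum_neg_distrib]
      simp
    rw [this, Finset.prod_mul_distrib, Finset.prod_mul_distrib]
    rfl
  simp_rw [hfun]
  exact Integrable.fintype_prod (fun i => intCC' (d (Sum.inl i)) (d (Sum.inr i)))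


/-- the Fock inner product of `q_λ` with a dilated `q_β`. -/
theorem fockInner_q_dilated (S : GBCS) (q p : S.Λ → (Fin S.n → ℂ) → ℂ)
    (hqpoly : ∀ l : S.Λ, IsPolyFun S.n (q l))
    (hppoly : ∀ l : S.Λ, IsPolyFun S.n (p l))
    (hpreal : ∀ l : S.Λ, ∀ z : Fin S.n → ℂ, (p l z).im = 0)
    (hhom : ∀ l : S.Λ, ∀ t : ℝ, 0 ≤ t → ∀ z : Fin S.n → ℂ,
      p l ((t : ℂ) • z) = (t : ℂ) ^ (2 * S.deg l) * p l z)
    (hq : ∀ l : S.Λ, ∀ z : Fin S.n → ℂ,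
      q l z = ∑ᶠ b ∈ {x : S.Λ | S.deg x ≤ S.deg l},
        (-1 : ℂ) ^ (S.deg b) * (S.B l b : ℂ) * p b z)
    (hp : ∀ l : S.Λ, ∀ z : Fin S.n → ℂ,
      p l z = ∑ᶠ b ∈ {x : S.Λ | S.deg x ≤ S.deg l},
        (-1 : ℂ) ^ (S.deg b) * (S.B l b : ℂ) * q b z)
    (horth : ∀ l m : S.Λ,
      fockInner S.n (q l) (q m) = if l = m then ((1 / S.d l : ℝ) : ℂ) else 0)
    (c : ℝ) (hc0 : 0 < c) (hc1 : c < 1) (lam β : S.Λ) :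
    fockInner S.n (q lam) (fun z => q β ((Real.sqrt (1 - c) : ℂ) • z))
      = (((1 / S.d lam) * S.B β lam * c ^ (S.deg β - S.deg lam) *
          (1 - c) ^ (S.deg lam) : ℝ) : ℂ) := by
  classical
  have hfin : ∀ m : ℕ, {x : S.Λ | S.deg x ≤ m}.Finite := by
    intro m
    refine Set.Finite.subset
      (Set.Finite.biUnion (Finset.range (m+1)).finite_toSet
        (fun k _ => S.finite_fiber k)) ?_
    intro x hx
    simp only [Set.mem_iUnion, Finset.mem_coe, Finset.mem_range]
    exact ⟨S.deg x, Nat.lt_succ_of_le hx, rfl⟩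
  set T : Finset S.Λ := (hfin (S.deg β)).toFinset with hT
  have hmemT : ∀ x, x ∈ T ↔ S.deg x ≤ S.deg β := by
    intro x; rw [hT, Set.Finite.mem_toFinset]; rfl
  have h1c : (0:ℝ) ≤ 1 - c := by linarith
  have hsq : ((Real.sqrt (1 - c) : ℝ) : ℂ) ^ 2 = ((1 - c : ℝ) : ℂ) := by
    rw [← Complex.ofReal_pow, Real.sq_sqrt h1c]
  set Co : S.Λ → ℝ := fun a => ∑ b ∈ T,
    (-1:ℝ)^(S.deg b + S.deg a) * S.B β b * S.B b a * (1-c)^(S.deg b) with hCo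
  -- Step 1: expansion of the dilated q β in terms of the q a
  have hexp : ∀ z : Fin S.n → ℂ,
      q β ((Real.sqrt (1 - c) : ℂ) • z) = ∑ a ∈ T, ((Co a : ℝ) : ℂ) * q a z := by
    intro z
    rw [hq β ((Real.sqrt (1 - c) : ℂ) • z),
      finsum_mem_eq_finite_toFinset_sum _ (hfin (S.deg β))]
    have step1 : ∀ b ∈ T, (-1:ℂ)^(S.deg b) * (S.B β b : ℂ) *
        p b ((Real.sqrt (1 - c) : ℂ) • z)
        = ∑ a ∈ T, ((-1:ℝ)^(S.deg b + S.deg a) * S.B β b * S.B b a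
            * (1-c)^(S.deg b) : ℝ) * q a z := by
      intro b hb
      rw [hhom b (Real.sqrt (1 - c)) (Real.sqrt_nonneg _) z, pow_mul, hsq,
        hp b z, finsum_mem_eq_finite_toFinset_sum _ (hfin (S.deg b))]
      have hsub : (hfin (S.deg b)).toFinset ⊆ T := by
        intro x hx
        rw [Set.Finite.mem_toFinset] at hx
        exact (hmemT x).2 (le_trans hx ((hmemT b).1 hb))
      rw [Finset.sum_subset hsub ?hz]
      case hz =>
        intro x hx hx'
        rw [Set.Finite.mem_toFinset] at hx'
        have : S.deg b < S.deg x := by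
          by_contra h
          exact hx' (not_lt.mp h)
        rw [S.B_vanish b x this]
        simp
      simp only [Finset.mul_sum]
      refine Finset.sum_congr rfl fun a _ => ?_
      push_cast [pow_add]
      ring
    rw [Finset.sum_congr rfl step1, Finset.sum_comm]
    refine Finset.sum_congr rfl fun a _ => ?_
    rw [hCo]
    push_cast
    rw [Finset.sum_mul]
  -- Step 2: linearity of the inner product
  have hlin : fockInner S.n (q lam) (fun z => q β ((Real.sqrt (1 - c) : ℂ) • z))
      = ∑ a ∈ T, ((Co a : ℝ) : ℂ) * fockInner S.n (q lam) (q a) := by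
    unfold fockInner
    have hint : ∀ z : Fin S.n → ℂ,
        q lam z * (starRingEnd ℂ) (q β ((Real.sqrt (1 - c) : ℂ) • z)) *
          Complex.exp (-((∑ i, Complex.normSq (z i) : ℝ) : ℂ))
        = ∑ a ∈ T, ((Co a : ℝ) : ℂ) * (q lam z * (starRingEnd ℂ) (q a z) *
            Complex.exp (-((∑ i, Complex.normSq (z i) : ℝ) : ℂ))) := by
      intro z
      rw [hexp z, map_sum, Finset.mul_sum, Finset.sum_mul]
      refine Finset.sum_congr rfl fun a _ => ?_
      rw [map_mul, Complex.conj_ofReal]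
      ring
    simp_rw [hint]
    rw [integral_finset_sum _ (fun a _ =>
      ((integrable_polyGauss (hqpoly lam) (hqpoly a)).const_mul _))]
    rw [Finset.mul_sum]
    refine Finset.sum_congr rfl fun a _ => ?_
    rw [integral_const_mul]
    ring
  rw [hlin]
  simp_rw [horth lam]
  simp_rw [mul_ite, mul_zero]
  rw [Finset.sum_ite_eq]
  by_cases hLN : S.deg lam ≤ S.deg β
  · rw [if_pos ((hmemT lam).2 hLN)]
    -- real computation
    have hCoLam : Co lam = S.B β lam * c ^ (S.deg β - S.deg lam) * (1-c) ^ (S.deg lam) := by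
      set N := S.deg β with hN
      set L := S.deg lam with hL
      set m := N - L with hm
      set G : ℕ → ℝ := fun l => if L ≤ l then
        (-1:ℝ)^(l+L) * (1-c)^l * (m.choose (l-L) : ℝ) * S.B β lam else 0 with hG
      have hmaps : ∀ x ∈ T, S.deg x ∈ Finset.range (N+1) := by
        intro x hx; rw [Finset.mem_range]; exact Nat.lt_succ_of_le ((hmemT x).1 hx)
      show (∑ b ∈ T, (-1:ℝ)^(S.deg b + L) * S.B β b * S.B b lam * (1-c)^(S.deg b)) = _
      rw [← Finset.sum_fiberwise_of_maps_to hmaps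
        (fun b => (-1:ℝ)^(S.deg b + L) * S.B β b * S.B b lam * (1-c)^(S.deg b))]
      have hinner : ∀ l ∈ Finset.range (N+1),
          (∑ x ∈ T.filter (fun x => S.deg x = l),
            (-1:ℝ)^(S.deg x + L) * S.B β x * S.B x lam * (1-c)^(S.deg x)) = G l := by
        intro l hl
        rw [Finset.mem_range] at hl
        have hlN : l ≤ N := Nat.lt_succ_iff.mp hl
        have hterm : ∀ x ∈ T.filter (fun x => S.deg x = l),
            (-1:ℝ)^(S.deg x + L) * S.B β x * S.B x lam * (1-c)^(S.deg x)
            = ((-1:ℝ)^(l + L) * (1-c)^l) * (S.B β x * S.B x lam) := by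
          intro x hx
          rw [Finset.mem_filter] at hx
          rw [hx.2]; ring
        rw [Finset.sum_congr rfl hterm, ← Finset.mul_sum]
        by_cases hLl : L ≤ l
        · have hfilter : T.filter (fun x => S.deg x = l) = (S.finite_fiber l).toFinset := by
            ext x
            simp only [Finset.mem_filter, Set.Finite.mem_toFinset, Set.mem_setOf_eq, hmemT x]
            constructor
            · exact fun h => h.2
            · exact fun h => ⟨by omega, h⟩
          rw [hfilter]
          have hconv := S.B_conv lam β hLN l hLl hlN
          rw [finsum_mem_eq_finite_toFinset_sum _ (S.finite_fiber l)] at hconv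
          rw [hconv]
          simp only [hG]
          rw [if_pos hLl]
          have hcast : ((m.choose (l - L) : ℕ) : ℝ)
              = (Nat.factorial m : ℝ) / ((Nat.factorial (l - L) : ℝ) * (Nat.factorial (m - (l - L)) : ℝ)) := by
            rw [Nat.cast_choose ℝ (by omega : l - L ≤ m)]
          have hml : m - (l - L) = N - l := by omega
          rw [hml] at hcast
          rw [hcast, hm, hL, hN]
          ring
        · have hzero : ∑ x ∈ T.filter (fun x => S.deg x = l), S.B β x * S.B x lam = 0 := by
            refine Finset.sum_eq_zero fun x hx => ?_
            rw [Finset.mem_filter] at hx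
            rw [S.B_vanish x lam (by omega : S.deg x < S.deg lam)]
            ring
          rw [hzero, mul_zero]
          simp only [hG]
          rw [if_neg hLl]
      rw [Finset.sum_congr rfl hinner]
      have hsub2 : Finset.Ico L (N+1) ⊆ Finset.range (N+1) := by
        intro x hx
        rw [Finset.mem_Ico] at hx
        rw [Finset.mem_range]
        exact hx.2
      rw [← Finset.sum_subset hsub2 (fun x hxr hx =>
        if_neg (fun h => hx (Finset.mem_Ico.mpr ⟨h, Finset.mem_range.mp hxr⟩)))]
      rw [Finset.sum_Ico_eq_sum_range]
      have hrange : N + 1 - L = m + 1 := by omega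
      rw [hrange]
      have hGval : ∀ k, G (L + k)
          = (S.B β lam * (1-c)^L) * ((-(1-c))^k * (m.choose k : ℝ)) := by
        intro k
        simp only [hG]
        rw [if_pos (Nat.le_add_right L k)]
        rw [Nat.add_sub_cancel_left]
        have h1 : ((-1:ℝ))^(L + k + L) = (-1:ℝ)^k := by
          have : L + k + L = 2 * L + k := by omega
          rw [this, pow_add, pow_mul, neg_one_sq, one_pow, one_mul]
        rw [h1, pow_add, neg_pow (1-c) k]
        ring
      rw [Finset.sum_congr rfl (fun k _ => hGval k), ← Finset.mul_sum]
      have hbin : ∑ k ∈ Finset.range (m+1), ((-(1-c))^k * (m.choose k : ℝ)) = c ^ m := by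
        have h := add_pow (-(1-c)) (1:ℝ) m
        simp only [one_pow, mul_one] at h
        rw [show (-(1-c) + 1 : ℝ) = c by ring] at h
        exact h.symm
      rw [hbin]
      ring
    rw [hCoLam]
    push_cast
    ring
  · rw [if_neg (fun h => hLN ((hmemT lam).1 h))]
    rw [S.B_vanish β lam (not_le.mp hLN)]
    push_cast
    ring
end

section
/- Let (Λ, |·|, d, n, B) be a generalized binomial coefficient system, and suppose that for each λ ∈ Λ there are functions q_λ, p_λ : ℂⁿ → ℂ such that: p_λ(t·z) = t^{2|λ|}·p_λ(z) for all real t ≥ 0 and all z; q_λ = ∑_{β : |β| ≤ |λ|} (−1)^{|β|}·B(λ,β)·p_β; and p_λ = ∑_{β : |β| ≤ |λ|} (−1)^{|β|}·B(λ,β)·q_β. Define, for s ∈ ℝ with s ≠ 0, φ_{s,λ}(z,w) = exp(i·s·w − |s|·‖z‖²/2)·q_λ(√|s|·z) for (z,w) ∈ ℂⁿ × ℝ, and ψ(z,w) = −i·w + ‖z‖²/2. Then for every t ≥ 0, every α ∈ Λ and every (z,w) ∈ ℂⁿ × ℝ, φ_{1,α}(z,w)·exp(−(e^t − 1)·ψ(z,w))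 = ∑_{β : |β| ≤ |α|} B(α,β)·e^{−t|β|}·(1−e^{−t})^{|α|−|β|}·φ_{e^t,β}(z,w). -/
open scoped Classical

/-- The bounded `K`-spherical function `φ_{s,λ}(z,w) = exp(isw - |s|‖z‖²/2) q_λ(√|s| z)`
on the Heisenberg group `ℂⁿ × ℝ`. -/
noncomputable def spherical (S : GBCS) (q : S.Λ → (Fin S.n → ℂ) → ℂ)
    (s : ℝ) (l : S.Λ) (z : Fin S.n → ℂ) (w : ℝ) : ℂ :=
  Complex.exp (Complex.I * (s : ℂ) * (w : ℂ)
      - ((|s| * ∑ i, Complex.normSq (z i) : ℝ) : ℂ) / 2) *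
    q l ((Real.sqrt |s| : ℂ) • z)

/-- The function `ψ(z,w) = -iw + ‖z‖²/2` on the Heisenberg group. -/
noncomputable def heisPsi (n : ℕ) (z : Fin n → ℂ) (w : ℝ) : ℂ :=
  -(Complex.I * (w : ℂ)) + ((∑ i, Complex.normSq (z i) : ℝ) : ℂ) / 2

lemma binom_sum_aux (t : ℝ) (g n : ℕ) (hg : g ≤ n) :
    ∑ l ∈ Finset.range (n+1),
      (if g ≤ l then ((n-g).choose (l-g) : ℝ) * Real.exp (-t*l) * (1 - Real.exp (-t))^(n-l) else 0)
      = Real.exp (-t*g) := by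
  classical
  rw [← Finset.sum_filter]
  have hfil : (Finset.range (n+1)).filter (fun l => g ≤ l) = Finset.Ico g (n+1) := by
    ext l; simp [Finset.mem_Ico, Nat.lt_succ_iff]; tauto
  rw [hfil, Finset.sum_Ico_eq_sum_range]
  have hnm : n + 1 - g = (n - g) + 1 := by omega
  rw [hnm]
  have key : ∀ k ∈ Finset.range ((n-g)+1),
      ((n-g).choose (g+k-g) : ℝ) * Real.exp (-t*((g+k : ℕ) : ℝ)) * (1 - Real.exp (-t))^(n-(g+k))
        = Real.exp (-t*g) * (Real.exp (-t) ^ k * (1 - Real.exp (-t))^((n-g)-k) * ((n-g).choose k : ℝ)) := by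
    intro k hk
    have h1 : g + k - g = k := by omega
    have h2 : n - (g+k) = (n-g) - k := by omega
    have h3 : Real.exp (-t*((g+k : ℕ) : ℝ)) = Real.exp (-t*g) * Real.exp (-t) ^ k := by
      push_cast
      rw [← Real.exp_nat_mul, ← Real.exp_add]
      ring_nf
    rw [h1, h2, h3]; ring
  rw [Finset.sum_congr rfl key, ← Finset.mul_sum, ← add_pow]
  simp

lemma fact_div_aux (g l n : ℕ) (hgl : g ≤ l) (hln : l ≤ n) :
    ((n-g).factorial : ℝ) / (((n-l).factorial : ℝ) * ((l-g).factorial : ℝ))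
      = ((n-g).choose (l-g) : ℝ) := by
  have hle : l - g ≤ n - g := by omega
  have h := Nat.choose_mul_factorial_mul_factorial hle
  have h2 : (n-g) - (l-g) = n - l := by omega
  rw [h2] at h
  rw [div_eq_iff (by positivity)]
  rw [mul_comm ((n-l).factorial : ℝ)]
  rw [← mul_assoc]
  exact_mod_cast h.symm

/-- the decomposition of `φ_{1,α}·exp(-(e^t-1)ψ)` into spherical functions. -/
theorem spherical_decomposition (S : GBCS) (q p : S.Λ → (Fin S.n → ℂ) → ℂ)
    (hhom : ∀ l : S.Λ, ∀ t : ℝ, 0 ≤ t → ∀ z : Fin S.n → ℂ,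
      p l ((t : ℂ) • z) = (t : ℂ) ^ (2 * S.deg l) * p l z)
    (hq : ∀ l : S.Λ, ∀ z : Fin S.n → ℂ,
      q l z = ∑ᶠ b ∈ {x : S.Λ | S.deg x ≤ S.deg l},
        (-1 : ℂ) ^ (S.deg b) * (S.B l b : ℂ) * p b z)
    (hp : ∀ l : S.Λ, ∀ z : Fin S.n → ℂ,
      p l z = ∑ᶠ b ∈ {x : S.Λ | S.deg x ≤ S.deg l},
        (-1 : ℂ) ^ (S.deg b) * (S.B l b : ℂ) * q b z)
    (t : ℝ) (ht : 0 ≤ t) (α : S.Λ) (z : Fin S.n → ℂ) (w : ℝ) :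
    spherical S q 1 α z w * Complex.exp (-(((Real.exp t - 1 : ℝ)) : ℂ) * heisPsi S.n z w)
      = ∑ᶠ b ∈ {x : S.Λ | S.deg x ≤ S.deg α},
          ((S.B α b * Real.exp (-t * (S.deg b : ℝ)) *
            (1 - Real.exp (-t)) ^ (S.deg α - S.deg b) : ℝ) : ℂ) *
            spherical S q (Real.exp t) b z w := by
  classical
  have hfin : ∀ m : ℕ, ({x : S.Λ | S.deg x ≤ m}).Finite := by
    intro m
    have hsub : {x : S.Λ | S.deg x ≤ m} ⊆ ⋃ l ∈ Finset.range (m+1), {x : S.Λ | S.deg x = l} := by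
      intro x hx
      simp only [Set.mem_iUnion]
      exact ⟨S.deg x, Finset.mem_range.mpr (Nat.lt_succ_of_le hx), rfl⟩
    exact Set.Finite.subset (Set.Finite.biUnion (Finset.range (m+1)).finite_toSet
      fun l _ => S.finite_fiber l) hsub
  set a := S.deg α with ha
  set r : ℝ := Real.sqrt (Real.exp t) with hr
  set N : ℝ := ∑ i, Complex.normSq (z i) with hN
  set E : ℂ := Complex.exp (Complex.I * ((Real.exp t : ℝ) : ℂ) * (w : ℂ)
      - ((Real.exp t * N : ℝ) : ℂ) / 2) with hE
  set T : Finset S.Λ := (hfin a).toFinset with hT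
  have hmemT : ∀ x, x ∈ T ↔ S.deg x ≤ a := by
    intro x; rw [hT, Set.Finite.mem_toFinset]; rfl
  have habs : |Real.exp t| = Real.exp t := abs_of_pos (Real.exp_pos t)
  -- LHS
  have hLHS : spherical S q 1 α z w
        * Complex.exp (-(((Real.exp t - 1 : ℝ)) : ℂ) * heisPsi S.n z w) = E * q α z := by
    simp only [spherical, heisPsi, abs_one, Real.sqrt_one, Complex.ofReal_one, one_smul, hE, ← hN]
    rw [mul_comm _ (q α z), mul_assoc, ← Complex.exp_add, mul_comm]
    congr 1
    push_cast
    ring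
  -- spherical at e^t
  have hsph : ∀ b, spherical S q (Real.exp t) b z w = E * q b ((r : ℂ) • z) := by
    intro b
    simp only [spherical, habs, hE, hr, ← hN]
  -- power of r
  have hrpow : ∀ g : ℕ, ((r : ℝ) : ℂ) ^ (2 * g) = ((Real.exp t : ℝ) : ℂ) ^ g := by
    intro g
    have h1 : ((r : ℝ) : ℂ) ^ (2 * g) = (((r ^ 2 : ℝ)) : ℂ) ^ g := by
      push_cast; rw [pow_mul]
    rw [h1, hr, Real.sq_sqrt (le_of_lt (Real.exp_pos t))]
  -- expand q b (r • z)
  have hqb : ∀ b ∈ T, q b ((r : ℂ) • z)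
      = ∑ γ ∈ T, (-1 : ℂ) ^ (S.deg γ) * (S.B b γ : ℂ)
          * (((Real.exp t : ℝ) : ℂ) ^ (S.deg γ) * p γ z) := by
    intro b hb
    have hba : S.deg b ≤ a := (hmemT b).1 hb
    have hsub : (hfin (S.deg b)).toFinset ⊆ T := by
      intro x hx
      rw [Set.Finite.mem_toFinset] at hx
      exact (hmemT x).2 (le_trans hx hba)
    calc q b ((r : ℂ) • z)
        = ∑ γ ∈ (hfin (S.deg b)).toFinset,
            (-1 : ℂ) ^ (S.deg γ) * (S.B b γ : ℂ) * p γ ((r : ℂ) • z) := by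
          rw [hq b]; exact finsum_mem_eq_finite_toFinset_sum _ _
      _ = ∑ γ ∈ (hfin (S.deg b)).toFinset,
            (-1 : ℂ) ^ (S.deg γ) * (S.B b γ : ℂ)
              * (((Real.exp t : ℝ) : ℂ) ^ (S.deg γ) * p γ z) := by
          refine Finset.sum_congr rfl fun γ _ => ?_
          rw [hhom γ r (Real.sqrt_nonneg _), hrpow (S.deg γ)]
      _ = ∑ γ ∈ T, (-1 : ℂ) ^ (S.deg γ) * (S.B b γ : ℂ)
              * (((Real.exp t : ℝ) : ℂ) ^ (S.deg γ) * p γ z) := by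
          refine Finset.sum_subset hsub fun γ hγT hγns => ?_
          rw [Set.Finite.mem_toFinset] at hγns
          have : S.B b γ = 0 := S.B_vanish b γ (by simpa using hγns)
          simp [this]
  -- the real sum identity
  have hS1 : ∀ γ ∈ T,
      (∑ b ∈ T, S.B α b * Real.exp (-t * (S.deg b : ℝ))
          * (1 - Real.exp (-t)) ^ (a - S.deg b) * S.B b γ)
        = S.B α γ * Real.exp (-t * (S.deg γ : ℝ)) := by
    intro γ hγ
    have hga : S.deg γ ≤ a := (hmemT γ).1 hγ
    have hmaps : ∀ b ∈ T, S.deg b ∈ Finset.range (a+1) := by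
      intro b hb
      exact Finset.mem_range.mpr (Nat.lt_succ_of_le ((hmemT b).1 hb))
    rw [← Finset.sum_fiberwise_of_maps_to hmaps]
    have hfib : ∀ l ∈ Finset.range (a+1),
        (∑ b ∈ T.filter (fun b => S.deg b = l),
            S.B α b * Real.exp (-t * (S.deg b : ℝ)) * (1 - Real.exp (-t)) ^ (a - S.deg b) * S.B b γ)
          = (if S.deg γ ≤ l then ((a - S.deg γ).choose (l - S.deg γ) : ℝ)
                * Real.exp (-t*(l : ℝ)) * (1 - Real.exp (-t)) ^ (a-l) else 0) * S.B α γ := by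
      intro l hl
      have hla : l ≤ a := Nat.lt_succ_iff.mp (Finset.mem_range.mp hl)
      by_cases hgl : S.deg γ ≤ l
      · have hTfil : T.filter (fun b => S.deg b = l) = (S.finite_fiber l).toFinset := by
          ext x
          rw [Finset.mem_filter, hmemT x, Set.Finite.mem_toFinset]
          constructor
          · exact fun h => h.2
          · intro h; exact ⟨by rw [Set.mem_setOf_eq] at h; omega, h⟩
        have hconv := S.B_conv γ α hga l hgl hla
        rw [finsum_mem_eq_finite_toFinset_sum _ (S.finite_fiber l)] at hconv
        have hstep : ∀ b ∈ T.filter (fun b => S.deg b = l),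
            S.B α b * Real.exp (-t * (S.deg b : ℝ)) * (1 - Real.exp (-t)) ^ (a - S.deg b) * S.B b γ
              = (S.B α b * S.B b γ) * (Real.exp (-t*(l : ℝ)) * (1 - Real.exp (-t)) ^ (a-l)) := by
          intro b hb
          have hbl : S.deg b = l := (Finset.mem_filter.mp hb).2
          rw [hbl]; ring
        rw [Finset.sum_congr rfl hstep, ← Finset.sum_mul, hTfil, hconv,
          fact_div_aux (S.deg γ) l a hgl hla, if_pos hgl]
        ring
      · rw [if_neg hgl, zero_mul]
        refine Finset.sum_eq_zero fun b hb => ?_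
        have hbl : S.deg b = l := (Finset.mem_filter.mp hb).2
        have : S.B b γ = 0 := S.B_vanish b γ (by omega)
        rw [this, mul_zero]
    rw [Finset.sum_congr rfl hfib, ← Finset.sum_mul, binom_sum_aux t (S.deg γ) a hga]
    ring
  -- the complex per-γ identity
  have hmain : ∀ γ ∈ T,
      (∑ b ∈ T, ((S.B α b * Real.exp (-t * (S.deg b : ℝ))
            * (1 - Real.exp (-t)) ^ (a - S.deg b) : ℝ) : ℂ)
          * ((-1 : ℂ) ^ (S.deg γ) * (S.B b γ : ℂ)
              * (((Real.exp t : ℝ) : ℂ) ^ (S.deg γ) * p γ z)))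
        = (-1 : ℂ) ^ (S.deg γ) * (S.B α γ : ℂ) * p γ z := by
    intro γ hγ
    have hstep : ∀ b ∈ T,
        ((S.B α b * Real.exp (-t * (S.deg b : ℝ))
            * (1 - Real.exp (-t)) ^ (a - S.deg b) : ℝ) : ℂ)
          * ((-1 : ℂ) ^ (S.deg γ) * (S.B b γ : ℂ)
              * (((Real.exp t : ℝ) : ℂ) ^ (S.deg γ) * p γ z))
          = ((S.B α b * Real.exp (-t * (S.deg b : ℝ))
              * (1 - Real.exp (-t)) ^ (a - S.deg b) * S.B b γ : ℝ) : ℂ)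
            * ((-1 : ℂ) ^ (S.deg γ) * (((Real.exp t : ℝ) : ℂ) ^ (S.deg γ) * p γ z)) := by
      intro b hb; push_cast; ring
    rw [Finset.sum_congr rfl hstep, ← Finset.sum_mul, ← Complex.ofReal_sum, hS1 γ hγ]
    have hX : ((Real.exp (-t * (S.deg γ : ℝ)) : ℝ) : ℂ)
        * ((Real.exp t : ℝ) : ℂ) ^ (S.deg γ) = 1 := by
      rw [← Complex.ofReal_pow, ← Complex.ofReal_mul, ← Real.exp_nat_mul, ← Real.exp_add,
        show -t * (S.deg γ : ℝ) + (S.deg γ : ℝ) * t = 0 by ring, Real.exp_zero,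
        Complex.ofReal_one]
    calc ((S.B α γ * Real.exp (-t * (S.deg γ : ℝ)) : ℝ) : ℂ)
          * ((-1 : ℂ) ^ (S.deg γ) * (((Real.exp t : ℝ) : ℂ) ^ (S.deg γ) * p γ z))
        = ((-1 : ℂ) ^ (S.deg γ) * (S.B α γ : ℂ) * p γ z)
            * (((Real.exp (-t * (S.deg γ : ℝ)) : ℝ) : ℂ)
                * ((Real.exp t : ℝ) : ℂ) ^ (S.deg γ)) := by push_cast; ring
      _ = (-1 : ℂ) ^ (S.deg γ) * (S.B α γ : ℂ) * p γ z := by rw [hX, mul_one]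
  -- the key identity
  have key : q α z = ∑ b ∈ T,
      ((S.B α b * Real.exp (-t * (S.deg b : ℝ))
          * (1 - Real.exp (-t)) ^ (a - S.deg b) : ℝ) : ℂ) * q b ((r : ℂ) • z) := by
    symm
    calc ∑ b ∈ T, ((S.B α b * Real.exp (-t * (S.deg b : ℝ))
            * (1 - Real.exp (-t)) ^ (a - S.deg b) : ℝ) : ℂ) * q b ((r : ℂ) • z)
        = ∑ b ∈ T, ∑ γ ∈ T, ((S.B α b * Real.exp (-t * (S.deg b : ℝ))
            * (1 - Real.exp (-t)) ^ (a - S.deg b) : ℝ) : ℂ)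
          * ((-1 : ℂ) ^ (S.deg γ) * (S.B b γ : ℂ)
              * (((Real.exp t : ℝ) : ℂ) ^ (S.deg γ) * p γ z)) := by
          refine Finset.sum_congr rfl fun b hb => ?_
          rw [hqb b hb, Finset.mul_sum]
      _ = ∑ γ ∈ T, ∑ b ∈ T, ((S.B α b * Real.exp (-t * (S.deg b : ℝ))
            * (1 - Real.exp (-t)) ^ (a - S.deg b) : ℝ) : ℂ)
          * ((-1 : ℂ) ^ (S.deg γ) * (S.B b γ : ℂ)
              * (((Real.exp t : ℝ) : ℂ) ^ (S.deg γ) * p γ z)) := Finset.sum_comm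
      _ = ∑ γ ∈ T, (-1 : ℂ) ^ (S.deg γ) * (S.B α γ : ℂ) * p γ z :=
          Finset.sum_congr rfl hmain
      _ = q α z := by
          rw [hq α]
          exact (finsum_mem_eq_finite_toFinset_sum _ (hfin a)).symm
  -- conclude
  rw [hLHS, finsum_mem_eq_finite_toFinset_sum _ (hfin a), key, Finset.mul_sum]
  refine Finset.sum_congr rfl fun b hb => ?_
  rw [hsph b]
  ring
end

section
/- Fix a positive integer n. For t ∈ ℝ and k, l ∈ ℕ define P_t(k,l) = binom(l+n−1, k+n−1)·(1−e^{−t})^{l−k}·e^{−t(k+n)} if l ≥ k, and P_t(k,l) = 0 if l < k. Then for all s, t ≥ 0 and all k, l ∈ ℕ with k ≤ l, ∑_{m=k}^{l} P_s(k,m)·P_t(m,l) = P_{s+t}(k,l); moreover, for every t ≥ 0 and k ∈ ℕ the family (P_t(k,l))_{l ∈ ℕ} is summable with sum 1. -/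
/-- The transition kernel of the Yule pure birth process with immigration on `ℕ`,
with birth rate `k + n` in state `k`. -/
noncomputable def yuleP (n : ℕ) (t : ℝ) (k l : ℕ) : ℝ :=
  if k ≤ l then
    (Nat.choose (l + n - 1) (k + n - 1) : ℝ) * (1 - Real.exp (-t)) ^ (l - k) *
      Real.exp (-t * ((k : ℝ) + n))
  else 0

lemma yule_choose_aux (n k i l : ℕ) (hn : 1 ≤ n) (hil : k + i ≤ l) :
    (k + i + n - 1).choose (k + n - 1) * (l + n - 1).choose (k + i + n - 1) =
      (l + n - 1).choose (k + n - 1) * (l - k).choose i := by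
  rw [mul_comm, Nat.choose_mul (by omega)]
  congr 1
  congr 1 <;> omega

/-- Chapman–Kolmogorov and stochasticity for the Yule semigroup. -/
theorem yuleP_chapman_and_hasSum (n : ℕ) (hn : 1 ≤ n) :
    (∀ s t : ℝ, 0 ≤ s → 0 ≤ t → ∀ k l : ℕ, k ≤ l →
      (∑ m ∈ Finset.Icc k l, yuleP n s k m * yuleP n t m l) = yuleP n (s + t) k l) ∧
    (∀ t : ℝ, 0 ≤ t → ∀ k : ℕ, HasSum (fun l => yuleP n t k l) 1) := by
  constructor
  · intro s t hs ht k l hkl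
    have hE : Real.exp (-(s + t) * ((k : ℝ) + n)) =
        Real.exp (-s * ((k : ℝ) + n)) * Real.exp (-t * ((k : ℝ) + n)) := by
      rw [← Real.exp_add]; ring_nf
    have hkey : (1 - Real.exp (-(s + t))) =
        (1 - Real.exp (-s)) * Real.exp (-t) + (1 - Real.exp (-t)) := by
      rw [neg_add, Real.exp_add]; ring
    rw [show Finset.Icc k l = Finset.Ico k (l + 1) by rfl, Finset.sum_Ico_eq_sum_range]
    have hstep : ∀ i ∈ Finset.range (l + 1 - k),
        yuleP n s k (k + i) * yuleP n t (k + i) l =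
          ((l + n - 1).choose (k + n - 1) : ℝ) *
            (((1 - Real.exp (-s)) * Real.exp (-t)) ^ i *
              (1 - Real.exp (-t)) ^ (l - k - i) * ((l - k).choose i : ℝ)) *
            (Real.exp (-s * ((k : ℝ) + n)) * Real.exp (-t * ((k : ℝ) + n))) := by
      intro i hi
      rw [Finset.mem_range] at hi
      have hil : k + i ≤ l := by omega
      rw [yuleP, if_pos (Nat.le_add_right k i), yuleP, if_pos hil]
      have h1 : k + i - k = i := by omega
      rw [h1]
      have hexp : Real.exp (-t * (((k + i : ℕ) : ℝ) + n)) =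
          Real.exp (-t * ((k : ℝ) + n)) * Real.exp (-t) ^ i := by
        rw [← Real.exp_nat_mul, ← Real.exp_add]
        push_cast
        ring_nf
      rw [hexp]
      have hc : ((k + i + n - 1).choose (k + n - 1) : ℝ) *
          ((l + n - 1).choose (k + i + n - 1) : ℝ) =
          ((l + n - 1).choose (k + n - 1) : ℝ) * ((l - k).choose i : ℝ) := by
        exact_mod_cast congrArg (Nat.cast (R := ℝ)) (yule_choose_aux n k i l hn hil)
      have h2 : l - (k + i) = l - k - i := by omega
      rw [h2]
      push_cast
      rw [mul_pow]
      linear_combination ((1 - Real.exp (-s)) ^ i * Real.exp (-t) ^ i *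
        (1 - Real.exp (-t)) ^ (l - k - i) * Real.exp (-s * ((k : ℝ) + n)) *
        Real.exp (-t * ((k : ℝ) + n))) * hc
    rw [Finset.sum_congr rfl hstep, ← Finset.sum_mul, ← Finset.mul_sum,
      show l + 1 - k = (l - k) + 1 by omega, ← add_pow]
    rw [yuleP, if_pos hkl, hkey, hE]
  · intro t ht k
    have hq0 : 0 ≤ 1 - Real.exp (-t) := by
      have := Real.exp_le_one_iff.mpr (neg_nonpos.mpr ht)
      linarith
    have hq1 : 1 - Real.exp (-t) < 1 := by
      have := Real.exp_pos (-t)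
      linarith
    have hqnorm : ‖1 - Real.exp (-t)‖ < 1 := by
      rw [Real.norm_eq_abs, abs_of_nonneg hq0]; exact hq1
    have h := hasSum_choose_mul_geometric_of_norm_lt_one (𝕜 := ℝ) (k + n - 1) hqnorm
    have hsub : (1 : ℝ) - (1 - Real.exp (-t)) = Real.exp (-t) := by ring
    rw [hsub] at h
    have hpow : Real.exp (-t) ^ (k + n - 1 + 1) = Real.exp (-t * ((k : ℝ) + n)) := by
      rw [← Real.exp_nat_mul]
      congr 1
      have : k + n - 1 + 1 = k + n := by omega
      rw [this]
      push_cast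
      ring
    have h2 := h.mul_right (Real.exp (-t * ((k : ℝ) + n)))
    have hval : 1 / Real.exp (-t) ^ (k + n - 1 + 1) * Real.exp (-t * ((k : ℝ) + n)) = 1 := by
      rw [hpow]
      field_simp
    rw [hval] at h2
    have h3 : HasSum (fun j => yuleP n t k (j + k)) 1 := by
      refine h2.congr_fun fun j => ?_
      rw [yuleP, if_pos (Nat.le_add_left k j)]
      have e1 : j + k + n - 1 = j + (k + n - 1) := by omega
      have e2 : j + k - k = j := by omega
      rw [e1, e2]
    have h4 := (hasSum_nat_add_iff (f := fun l => yuleP n t k l) k).mp h3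
    have h0 : ∑ i ∈ Finset.range k, yuleP n t k i = 0 := by
      refine Finset.sum_eq_zero fun i hi => ?_
      rw [Finset.mem_range] at hi
      rw [yuleP, if_neg (by omega)]
    rw [h0, add_zero] at h4
    exact h4
end

section
/- Fix a positive integer n. For t ∈ ℝ and α, β ∈ ℕⁿ define P_t(α,β) = ∏_{j=1}^{n} binom(β_j, α_j)·(1−e^{−t})^{β_j−α_j}·(e^{−t})^{1+α_j} if α_j ≤ β_j for all j, and P_t(α,β) = 0 otherwise. Then P_0(α,β) = 1 if α = β and 0 otherwise, and for every α, β ∈ ℕⁿ and t ≥ 0 the map t ↦ P_t(α,β) is differentiable with derivative (d/dt) P_t(α,β) = ∑_{i : β_i ≥ 1} β_i·P_t(α, β − e_i) − (n + ∑_{i=1}^{n} β_i)·P_t(α,β), where e_i is the i-th standard unit vector of ℕⁿ. -/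
open scoped Classical

/-- The transition kernel of the `n`-dimensional pure birth process arising from the
multiplicity free action of the `n`-torus `T(n)` on `ℂⁿ` (i.e. `n` independent Yule processes
with individual birth rate `1` and immigration rate `1`). -/
noncomputable def torusP (n : ℕ) (t : ℝ) (α β : Fin n → ℕ) : ℝ :=
  if ∀ j, α j ≤ β j then
    ∏ j, ((Nat.choose (β j) (α j) : ℝ) * (1 - Real.exp (-t)) ^ (β j - α j) *
      Real.exp (-t) ^ (1 + α j))
  else 0

noncomputable def Dfac (a b : ℕ) (t : ℝ) : ℝ :=
  (if 1 ≤ b then (b : ℝ) * ((b - 1).choose a : ℝ) * (1 - Real.exp (-t)) ^ ((b - 1) - a) *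
      Real.exp (-t) ^ (1 + a) else 0)
  - (1 + (b : ℝ)) * ((b.choose a : ℝ) * (1 - Real.exp (-t)) ^ (b - a) * Real.exp (-t) ^ (1 + a))

lemma key_alg (a b : ℕ) (hab : a ≤ b) (t : ℝ) :
    Dfac a b t
      = (b.choose a : ℝ) * ((((b - a : ℕ) : ℝ) * (1 - Real.exp (-t)) ^ (b - a - 1) * Real.exp (-t))
          * Real.exp (-t) ^ (1 + a)
        + (1 - Real.exp (-t)) ^ (b - a) *
          (((1 + a : ℕ) : ℝ) * Real.exp (-t) ^ (1 + a - 1) * (-Real.exp (-t)))) := by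
  rcases eq_or_lt_of_le hab with rfl | hlt
  · -- a = b
    rcases Nat.eq_zero_or_pos a with rfl | hpos
    · simp [Dfac, pow_succ]
    · have h0 : (a - 1).choose a = 0 := Nat.choose_eq_zero_of_lt (by omega)
      have e : 1 + a - 1 = a := by omega
      simp only [Dfac, h0, e, Nat.sub_self, pow_zero, Nat.choose_self, Nat.cast_zero,
        Nat.cast_one, ite_self, mul_zero, zero_mul]
      push_cast
      ring
  · obtain ⟨c, rfl⟩ : ∃ c, b = a + c + 1 := ⟨b - a - 1, by omega⟩
    have hnat : (a + c + 1) * (a + c).choose a = (c + 1) * (a + c + 1).choose a := by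
      have h1 := Nat.add_one_mul_choose_eq (a + c) a
      have h2 := Nat.choose_succ_right_eq (a + c + 1) a
      rw [show a + c + 1 - a = c + 1 from by omega] at h2
      rw [h1, h2]
      ring
    have hR : ((a : ℝ) + c + 1) * ((a + c).choose a : ℝ)
        = ((c : ℝ) + 1) * ((a + c + 1).choose a : ℝ) := by
      exact_mod_cast congrArg (Nat.cast (R := ℝ)) hnat
    have e1 : a + c + 1 - 1 = a + c := by omega
    have e2 : a + c + 1 - a = c + 1 := by omega
    have e3 : a + c - a = c := by omega
    have e4 : 1 + a - 1 = a := by omega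
    rw [Dfac, if_pos (by omega), e1, e2, e3, e4]
    push_cast
    linear_combination ((1 - Real.exp (-t)) ^ c * Real.exp (-t) ^ a * Real.exp (-t)) * hR

lemma fac_hasDerivAt (a b : ℕ) (t : ℝ) (hab : a ≤ b) :
    HasDerivAt
      (fun s => (b.choose a : ℝ) * (1 - Real.exp (-s)) ^ (b - a) * Real.exp (-s) ^ (1 + a))
      (Dfac a b t) t := by
  have hx : HasDerivAt (fun s : ℝ => Real.exp (-s)) (-Real.exp (-t)) t := by
    simpa [Function.comp_def] using (Real.hasDerivAt_exp (-t)).comp t (hasDerivAt_neg t)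
  have h1 : HasDerivAt (fun s : ℝ => 1 - Real.exp (-s)) (Real.exp (-t)) t := by
    simpa using (hasDerivAt_const t (1 : ℝ)).fun_sub hx
  have h2 := h1.fun_pow (b - a)
  have h3 := hx.fun_pow (1 + a)
  have h4 := (h2.fun_mul h3).const_mul (b.choose a : ℝ)
  rw [← key_alg a b hab t] at h4
  exact h4.congr_of_eventuallyEq (Filter.Eventually.of_forall fun s => by ring)

lemma torusP_pos {n : ℕ} {α β : Fin n → ℕ} (h : ∀ j, α j ≤ β j) (t : ℝ) :
    torusP n t α β = ∏ j, ((Nat.choose (β j) (α j) : ℝ) * (1 - Real.exp (-t)) ^ (β j - α j) *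
      Real.exp (-t) ^ (1 + α j)) := if_pos h

lemma torusP_neg {n : ℕ} {α β : Fin n → ℕ} (h : ¬ ∀ j, α j ≤ β j) (t : ℝ) :
    torusP n t α β = 0 := if_neg h

/-- initial condition and Kolmogorov forward equation for `torusP`. -/
theorem torusP_initial_and_deriv (n : ℕ) (hn : 1 ≤ n) (α β : Fin n → ℕ) :
    (torusP n 0 α β = if α = β then 1 else 0) ∧
    (∀ t : ℝ, 0 ≤ t →
      HasDerivAt (fun s => torusP n s α β)
        ((∑ i ∈ Finset.univ.filter (fun i : Fin n => 1 ≤ β i),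
            (β i : ℝ) * torusP n t α (Function.update β i (β i - 1)))
          - ((n : ℝ) + ∑ i, (β i : ℝ)) * torusP n t α β) t) := by
  constructor
  · by_cases h : ∀ j, α j ≤ β j
    · rw [torusP_pos h]
      by_cases hab : α = β
      · subst hab
        simp
      · rw [if_neg hab]
        obtain ⟨j, hj⟩ : ∃ j, α j ≠ β j := by
          by_contra hc; push_neg at hc; exact hab (funext hc)
        refine Finset.prod_eq_zero (Finset.mem_univ j) ?_
        have : α j < β j := lt_of_le_of_ne (h j) hj
        simp [zero_pow (Nat.sub_ne_zero_of_lt this)]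
    · rw [torusP_neg h]
      push_neg at h
      obtain ⟨j, hj⟩ := h
      rw [if_neg]
      rintro rfl
      omega
  · intro t _
    by_cases h : ∀ j, α j ≤ β j
    · -- main case
      set g : Fin n → ℝ → ℝ := fun j s =>
        ((β j).choose (α j) : ℝ) * (1 - Real.exp (-s)) ^ (β j - α j) *
          Real.exp (-s) ^ (1 + α j) with hg
      have hprod : HasDerivAt (fun s => ∏ j, g j s)
          (∑ i, (∏ j ∈ Finset.univ.erase i, g j t) • Dfac (α i) (β i) t) t := by
        have := HasDerivAt.fun_finsetProd (u := Finset.univ) (f := g)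
          (f' := fun i => Dfac (α i) (β i) t) (x := t)
          (fun i _ => fac_hasDerivAt (α i) (β i) t (h i))
        convert this using 2
      have hterm : ∀ i : Fin n, (∏ j ∈ Finset.univ.erase i, g j t) • Dfac (α i) (β i) t
          = (if 1 ≤ β i then (β i : ℝ) * torusP n t α (Function.update β i (β i - 1)) else 0)
            - (1 + (β i : ℝ)) * torusP n t α β := by
        intro i
        rw [smul_eq_mul, Dfac, mul_sub]
        congr 1
        · split_ifs with hb
          · by_cases hc : α i ≤ β i - 1
            · have hcond : ∀ j, α j ≤ Function.update β i (β i - 1) j := by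
                intro j
                rcases eq_or_ne j i with rfl | hne
                · simpa using hc
                · simpa [Function.update_of_ne hne] using h j
              rw [torusP_pos hcond]
              rw [← Finset.mul_prod_erase Finset.univ _ (Finset.mem_univ i)]
              have hfac : ∀ j ∈ Finset.univ.erase i,
                  ((Function.update β i (β i - 1) j).choose (α j) : ℝ) *
                    (1 - Real.exp (-t)) ^ (Function.update β i (β i - 1) j - α j) *
                    Real.exp (-t) ^ (1 + α j) = g j t := by
                intro j hj
                rw [Function.update_of_ne (Finset.ne_of_mem_erase hj)]
              rw [Finset.prod_congr rfl hfac]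
              simp only [Function.update_self]
              ring
            · have hieq : α i = β i := by have := h i; omega
              have hncond : ¬ ∀ j, α j ≤ Function.update β i (β i - 1) j := by
                intro hcon
                have := hcon i
                rw [Function.update_self] at this
                omega
              rw [torusP_neg hncond]
              have h0 : ((β i - 1).choose (α i) : ℝ) = 0 := by
                rw [Nat.choose_eq_zero_of_lt (by omega)]
                simp
              rw [h0]
              ring
          · simp
        · rw [torusP_pos h]
          rw [← Finset.mul_prod_erase Finset.univ (fun j => g j t) (Finset.mem_univ i)]
          simp only [hg]
          ring
      have hfun : (fun s => torusP n s α β) = fun s => ∏ j, g j s := by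
        funext s; exact torusP_pos h s
      rw [hfun]
      convert hprod using 1
      rw [Finset.sum_congr rfl (fun i _ => hterm i), Finset.sum_sub_distrib]
      congr 1
      · rw [Finset.sum_filter]
      · rw [← Finset.sum_mul]
        congr 1
        rw [Finset.sum_add_distrib]
        simp [Finset.card_univ]
      -- direction check
    · have hfun : (fun s => torusP n s α β) = fun _ => (0 : ℝ) := by
        funext s; exact torusP_neg h s
      rw [hfun]
      push_neg at h
      obtain ⟨j, hj⟩ := h
      have hz : ∀ i : Fin n, torusP n t α (Function.update β i (β i - 1)) = 0 := by
        intro i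
        refine torusP_neg ?_ t
        intro hcon
        have := hcon j
        rcases eq_or_ne j i with rfl | hne
        · rw [Function.update_self] at this; omega
        · rw [Function.update_of_ne hne] at this; omega
      have : (∑ i ∈ Finset.univ.filter (fun i : Fin n => 1 ≤ β i),
            (β i : ℝ) * torusP n t α (Function.update β i (β i - 1)))
          - ((n : ℝ) + ∑ i, (β i : ℝ)) * torusP n t α β = 0 := by
        rw [torusP_neg (by push_neg; exact ⟨j, hj⟩) t]
        rw [Finset.sum_eq_zero (fun i _ => by rw [hz i]; ring)]
        ring
      rw [this]
      exact hasDerivAt_const t 0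
end

section
/- Fix a positive integer n. Let α, β ∈ ℕⁿ and suppose there exists an integer i ≥ 1 such that β[i−1] = α[i−1] + 1, β[i] = α[i] − 1 (so α[i] ≥ 1), and β[j] = α[j] for all j ∉ {i−1, i}. Then B(α,β) = i·α[i], where B is the generalized binomial coefficient for the action of Sₙ ⋉ T(n) on ℂⁿ given by B(λ,μ) = (1/∏_{j ∈ ℕ} μ[j]!)·∑_{σ ∈ Sₙ : σ(μ)_i ≤ λ_i for all i} ∏_{i=1}^{n} binom(λ_i, σ(μ)_i). -/
open scoped Classical

/-- `freq n μ j` is the number of indices `i` with `μ i = j` (the frequency representation). -/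
def freq (n : ℕ) (μ : Fin n → ℕ) (j : ℕ) : ℕ :=
  (Finset.univ.filter (fun i : Fin n => μ i = j)).card

/-- The generalized binomial coefficient for the multiplicity free action of
`Sₙ ⋉ T(n)` on `ℂⁿ`. -/
noncomputable def Bst (n : ℕ) (lam mu : Fin n → ℕ) : ℝ :=
  (1 / ((∏ᶠ j : ℕ, Nat.factorial (freq n mu j) : ℕ) : ℝ)) *
    ∑ σ ∈ Finset.univ.filter
        (fun σ : Equiv.Perm (Fin n) => ∀ i, mu (σ i) ≤ lam i),
      ∏ i, (Nat.choose (lam i) (mu (σ i)) : ℝ)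

/-- The dimension `d_λ = n!/∏_j λ[j]!` of the irreducible subspace `P_λ` for the action of
`Sₙ ⋉ T(n)` on `ℂⁿ`. -/
noncomputable def dST (n : ℕ) (lam : Fin n → ℕ) : ℝ :=
  (Nat.factorial n : ℝ) / ((∏ᶠ j : ℕ, Nat.factorial (freq n lam j) : ℕ) : ℝ)

open Finset Equiv

lemma freq_eq_sum (n : ℕ) (f : Fin n → ℕ) (j : ℕ) :
    freq n f j = ∑ k : Fin n, if f k = j then 1 else 0 := by
  rw [freq, Finset.card_filter]

lemma freq_card_subtype (n : ℕ) (f : Fin n → ℕ) (j : ℕ) :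
    Fintype.card {a : Fin n // f a = j} = freq n f j := by
  simp [freq, Fintype.card_subtype]

lemma freq_update (n : ℕ) (f : Fin n → ℕ) (k₀ : Fin n) (v j : ℕ) :
    freq n (Function.update f k₀ v) j + (if f k₀ = j then 1 else 0)
      = freq n f j + (if v = j then 1 else 0) := by
  rw [freq_eq_sum, freq_eq_sum]
  have h1 : (fun k => if Function.update f k₀ v k = j then 1 else 0)
      = Function.update (fun k => if f k = j then 1 else 0) k₀ (if v = j then 1 else 0) := by
    funext k
    by_cases hk : k = k₀
    · subst hk; simp [Function.update]
    · simp [Function.update, hk]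
  rw [h1, Finset.sum_update_of_mem (Finset.mem_univ k₀),
    ← Finset.add_sum_erase _ _ (Finset.mem_univ k₀)]
  simp only [Finset.sdiff_singleton_eq_erase]
  ring

lemma freq_comp_perm (n : ℕ) (f : Fin n → ℕ) (σ : Equiv.Perm (Fin n)) (j : ℕ) :
    freq n (f ∘ σ) j = freq n f j := by
  rw [freq_eq_sum, freq_eq_sum]
  exact Equiv.sum_comp σ (fun k => if f k = j then 1 else 0)

lemma exists_perm_of_freq_eq (n : ℕ) (f g : Fin n → ℕ)
    (h : ∀ j, freq n f j = freq n g j) : ∃ τ : Equiv.Perm (Fin n), f ∘ τ = g := by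
  have hE : ∀ j, Fintype.card {a : Fin n // g a = j} = Fintype.card {a : Fin n // f a = j} := by
    intro j; rw [freq_card_subtype, freq_card_subtype, h j]
  let E : ∀ j, {a : Fin n // g a = j} ≃ {a : Fin n // f a = j} :=
    fun j => Fintype.equivOfCardEq (hE j)
  let t : Fin n → Fin n := fun k => (E (g k) ⟨k, rfl⟩ : {a : Fin n // f a = g k}).val
  have hE_eq : ∀ (a : Fin n) (j : ℕ) (hj : g a = j), t a = (E j ⟨a, hj⟩).val := by
    intro a j hj; subst hj; rfl
  have hft : ∀ k, f (t k) = g k := fun k => (E (g k) ⟨k, rfl⟩).prop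
  have hinj : Function.Injective t := by
    intro a b hab
    have hg : g a = g b := by rw [← hft a, ← hft b, hab]
    have ha := hE_eq a (g a) rfl
    have hb := hE_eq b (g a) hg.symm
    have : E (g a) ⟨a, rfl⟩ = E (g a) ⟨b, hg.symm⟩ := by
      apply Subtype.ext; rw [← ha, ← hb, hab]
    have := (E (g a)).injective this
    exact congrArg Subtype.val this
  have hbij : Function.Bijective t := (Finite.injective_iff_bijective).mp hinj
  refine ⟨Equiv.ofBijective t hbij, ?_⟩
  funext k
  exact hft k

lemma card_rearrange (n : ℕ) (f g : Fin n → ℕ) (h : ∀ j, freq n f j = freq n g j) :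
    (Finset.univ.filter fun σ : Equiv.Perm (Fin n) => f ∘ σ = g).card
      = ∏ᶠ j : ℕ, (freq n f j).factorial := by
  obtain ⟨τ, hτ⟩ := exists_perm_of_freq_eq n f g h
  have e : {σ : Equiv.Perm (Fin n) // f ∘ σ = g} ≃ {σ : Equiv.Perm (Fin n) // f ∘ σ = f} := by
    refine Equiv.subtypeEquiv (Equiv.mulRight τ⁻¹) (fun σ => ?_)
    simp only [Equiv.coe_mulRight]
    constructor
    · intro hs
      funext k
      have h1 : f (σ (τ⁻¹ k)) = g (τ⁻¹ k) := congrFun hs (τ⁻¹ k)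
      have h2 : g (τ⁻¹ k) = f (τ (τ⁻¹ k)) := (congrFun hτ (τ⁻¹ k)).symm
      simpa using h1.trans h2
    · intro hs
      funext k
      have h1 : f (σ (τ⁻¹ (τ k))) = f (τ k) := congrFun hs (τ k)
      have h2 : f (τ k) = g k := congrFun hτ k
      simpa using h1.trans h2
  have hc : (Finset.univ.filter fun σ : Equiv.Perm (Fin n) => f ∘ σ = g).card
      = Fintype.card {σ : Equiv.Perm (Fin n) // f ∘ σ = f} := by
    rw [← Fintype.card_congr e, Fintype.card_subtype]
  rw [hc, DomMulAct.stabilizer_card']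
  have hsupp : (Function.mulSupport fun j => (freq n f j).factorial)
      ⊆ ↑(Finset.univ.image f) := by
    intro j hj
    simp only [Function.mem_mulSupport] at hj
    have hfreq : freq n f j ≠ 0 := by
      intro h0; rw [h0] at hj; simp [Nat.factorial] at hj
    have : (Finset.univ.filter (fun a : Fin n => f a = j)).Nonempty :=
      Finset.card_pos.mp (Nat.pos_of_ne_zero hfreq)
    obtain ⟨a, ha⟩ := this
    simp only [Finset.mem_filter] at ha
    simp only [Finset.coe_image, Set.mem_image, Finset.mem_coe]
    exact ⟨a, by simp, ha.2⟩
  rw [finprod_eq_prod_of_mulSupport_subset _ hsupp]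
  exact Finset.prod_congr rfl fun j _ => by rw [freq_card_subtype]

lemma sum_eq_one_nat {ι : Type*} {s : Finset ι} (f : ι → ℕ) (h : ∑ x ∈ s, f x = 1) :
    ∃ a ∈ s, f a = 1 ∧ ∀ b ∈ s, b ≠ a → f b = 0 := by
  classical
  have hne : ∃ a ∈ s, f a ≠ 0 := by
    by_contra hc
    push_neg at hc
    have : ∑ x ∈ s, f x = 0 := Finset.sum_eq_zero fun x hx => hc x hx
    omega
  obtain ⟨a, ha, hfa⟩ := hne
  have hsplit := Finset.add_sum_erase s f ha
  have hfa1 : f a = 1 ∧ ∑ x ∈ s.erase a, f x = 0 := by omega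
  refine ⟨a, ha, hfa1.1, fun b hb hba => ?_⟩
  have := (Finset.sum_eq_zero_iff).mp hfa1.2 b (Finset.mem_erase.mpr ⟨hba, hb⟩)
  exact this



/-- the death rate for the `Sₙ ⋉ T(n)` process: if `β` arises from `α` by
replacing a part `i` with `i-1`, then `B(α,β) = i·α[i]`. -/
theorem Bst_death_rate (n : ℕ) (hn : 1 ≤ n) (α β : Fin n → ℕ) (i : ℕ) (hi : 1 ≤ i)
    (h1 : freq n β (i - 1) = freq n α (i - 1) + 1)
    (h2 : freq n β i + 1 = freq n α i)
    (h3 : ∀ j, j ≠ i - 1 → j ≠ i → freq n β j = freq n α j) :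
    Bst n α β = (i : ℝ) * (freq n α i : ℝ) := by
  have hfreq : ∀ k₀ : Fin n, α k₀ = i →
      ∀ j, freq n β j = freq n (Function.update α k₀ (i - 1)) j := by
    intro k₀ hk₀ j
    have hu := freq_update n α k₀ (i - 1) j
    rw [hk₀] at hu
    by_cases hj1 : j = i - 1
    · subst hj1
      rw [if_neg (by omega : ¬ i = i - 1), if_pos rfl] at hu
      omega
    · by_cases hj2 : j = i
      · subst hj2
        rw [if_pos rfl, if_neg (by omega : ¬ j - 1 = j)] at hu
        omega
      · rw [if_neg (fun h => hj2 h.symm), if_neg (fun h => hj1 h.symm)] at hu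
        rw [h3 j hj1 hj2]
        omega
  have hαi : 0 < freq n α i := by omega
  obtain ⟨ks, hks⟩ : ∃ k, α k = i := by
    obtain ⟨k, hk⟩ := Finset.card_pos.mp hαi
    exact ⟨k, (Finset.mem_filter.mp hk).2⟩
  have hβsum : (∑ k, β k) + 1 = ∑ k, α k := by
    obtain ⟨τ, hτ⟩ := exists_perm_of_freq_eq n β (Function.update α ks (i - 1)) (hfreq ks hks)
    have e1 : ∑ k, β k = ∑ k, Function.update α ks (i - 1) k := by
      rw [← Equiv.sum_comp τ β]
      exact Finset.sum_congr rfl fun k _ => congrFun hτ k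
    rw [e1, Finset.sum_update_of_mem (Finset.mem_univ ks),
      ← Finset.add_sum_erase _ _ (Finset.mem_univ ks), hks]
    simp only [Finset.sdiff_singleton_eq_erase]
    omega
  -- characterization of admissible permutations
  have hchar : ∀ σ : Equiv.Perm (Fin n), (∀ k, β (σ k) ≤ α k) →
      ∃ k₀, α k₀ = i ∧ β ∘ ⇑σ = Function.update α k₀ (i - 1) := by
    intro σ hσ
    have hcsum : ∑ k, β (σ k) = ∑ k, β k := Equiv.sum_comp σ β
    have hsub : ∑ k, (α k - β (σ k)) = 1 := by
      have hadd : ∑ k, (β (σ k) + (α k - β (σ k))) = ∑ k, α k :=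
        Finset.sum_congr rfl fun k _ => by have := hσ k; omega
      rw [Finset.sum_add_distrib] at hadd
      omega
    obtain ⟨k₀, -, hk1, hk0⟩ := sum_eq_one_nat _ hsub
    have hb0 : β (σ k₀) + 1 = α k₀ := by have := hσ k₀; omega
    have hupd : β ∘ ⇑σ = Function.update α k₀ (β (σ k₀)) := by
      funext k
      by_cases hk : k = k₀
      · subst hk; simp [Function.update]
      · have h0 := hk0 k (Finset.mem_univ k) hk
        have h := hσ k
        simp only [Function.comp_apply, Function.update, dif_neg hk]
        omega
    have hαk₀ : α k₀ = i := by
      have hfq : freq n β i = freq n (Function.update α k₀ (β (σ k₀))) i := by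
        rw [← hupd, freq_comp_perm]
      have hu := freq_update n α k₀ (β (σ k₀)) i
      split_ifs at hu <;> omega
    refine ⟨k₀, hαk₀, ?_⟩
    rw [hupd]
    have : β (σ k₀) = i - 1 := by omega
    rw [this]
  have hback : ∀ (k₀ : Fin n), α k₀ = i → ∀ σ : Equiv.Perm (Fin n),
      β ∘ ⇑σ = Function.update α k₀ (i - 1) → ∀ k, β (σ k) ≤ α k := by
    intro k₀ hk₀ σ hσ k
    have hc := congrFun hσ k
    simp only [Function.comp_apply] at hc
    by_cases hk : k = k₀
    · subst hk
      rw [Function.update_self] at hc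
      omega
    · rw [Function.update_of_ne hk] at hc
      omega
  set S := Finset.univ.filter (fun σ : Equiv.Perm (Fin n) => ∀ k, β (σ k) ≤ α k) with hS
  set A := Finset.univ.filter (fun k : Fin n => α k = i) with hA
  set P := ∏ᶠ j : ℕ, (freq n β j).factorial with hP
  have hSeq : S = A.biUnion (fun k₀ => Finset.univ.filter
      (fun σ : Equiv.Perm (Fin n) => β ∘ ⇑σ = Function.update α k₀ (i - 1))) := by
    ext σ
    simp only [hS, hA, Finset.mem_biUnion, Finset.mem_filter, Finset.mem_univ, true_and]
    constructor
    · intro hσ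
      obtain ⟨k₀, h, h'⟩ := hchar σ hσ
      exact ⟨k₀, h, h'⟩
    · rintro ⟨k₀, hk₀, hσ⟩
      exact hback k₀ hk₀ σ hσ
  have hScard : S.card = freq n α i * P := by
    rw [hSeq, Finset.card_biUnion]
    · rw [Finset.sum_congr rfl (fun k₀ hk₀ =>
        card_rearrange n β _ (hfreq k₀ (Finset.mem_filter.mp hk₀).2))]
      rw [Finset.sum_const, smul_eq_mul]
      congr 1
    · intro x hx y hy hxy
      rw [Function.onFun, Finset.disjoint_left]
      intro σ hσx hσy
      have hx' := (Finset.mem_filter.mp hx).2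
      have ex := congrFun (Finset.mem_filter.mp hσx).2 x
      have ey := congrFun (Finset.mem_filter.mp hσy).2 x
      rw [Function.update_self] at ex
      rw [Function.update_of_ne hxy] at ey
      omega
  have hprod : ∀ σ ∈ S, ∏ k, (α k).choose (β (σ k)) = i := by
    intro σ hσ
    obtain ⟨k₀, hk₀, hupd⟩ := hchar σ (Finset.mem_filter.mp hσ).2
    rw [Finset.prod_eq_single k₀]
    · have hb : β (σ k₀) = i - 1 := by
        have := congrFun hupd k₀
        simpa [Function.update_self] using this
      rw [hb, hk₀]
      have hsym := Nat.choose_symm (show i - 1 ≤ i by omega)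
      have h11 : i - (i - 1) = 1 := by omega
      rw [h11, Nat.choose_one_right] at hsym
      omega
    · intro k _ hk
      have hb : β (σ k) = α k := by
        have := congrFun hupd k
        simpa [Function.update_of_ne hk] using this
      rw [hb, Nat.choose_self]
    · intro h
      exact absurd (Finset.mem_univ k₀) h
  have hNsum : ∑ σ ∈ S, ∏ k, (α k).choose (β (σ k)) = i * (freq n α i * P) := by
    rw [Finset.sum_congr rfl hprod, Finset.sum_const, smul_eq_mul, hScard]
    ring
  have hPpos : 0 < P :=
    finprod_induction _ one_pos (fun x y hx hy => mul_pos hx hy)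
      (fun j => Nat.factorial_pos _)
  have hPne : ((P : ℕ) : ℝ) ≠ 0 := by
    exact_mod_cast hPpos.ne'
  rw [Bst]
  have hsum_cast : (∑ σ ∈ S, ∏ k, ((α k).choose (β (σ k)) : ℝ))
      = ((∑ σ ∈ S, ∏ k, (α k).choose (β (σ k)) : ℕ) : ℝ) := by
    push_cast
    rfl
  rw [show (Finset.univ.filter
      (fun σ : Equiv.Perm (Fin n) => ∀ k, β (σ k) ≤ α k)) = S from rfl]
  rw [hsum_cast, hNsum]
  rw [← hP]
  push_cast
  field_simp
end

section
/- Fix a positive integer n. Let α, β ∈ ℕⁿ and suppose there exists an integer i ≥ 0 such that β[i] = α[i] − 1 (so α[i] ≥ 1), β[i+1] = α[i+1] + 1, and β[j] = α[j] for all j ∉ {i, i+1}. Then (d_β/d_α)·B(β,α) = (i+1)·α[i], where d_λ = n!/∏_{j ∈ ℕ} λ[j]! and B is the generalized binomial coefficient for the action of Sₙ ⋉ T(n) on ℂⁿ given by B(λ,μ) = (1/∏_{j ∈ ℕ} μ[j]!)·∑_{σ ∈ Sₙ : σ(μ)_i ≤ λ_i for all i} ∏_{i=1}^{n} binom(λ_i,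 σ(μ)_i). -/
open scoped Classical

/- ### Auxiliary lemmas -/

lemma finprod_freq_eq (n N : ℕ) (μ : Fin n → ℕ) (h : ∀ k, μ k < N) :
    (∏ᶠ j : ℕ, Nat.factorial (freq n μ j)) = ∏ j ∈ Finset.range N, Nat.factorial (freq n μ j) := by
  apply finprod_eq_prod_of_mulSupport_subset
  intro j hj
  simp only [Function.mem_mulSupport] at hj
  have hfreq : freq n μ j ≠ 0 := by
    intro h0; rw [h0] at hj; exact hj rfl
  have hpos : 0 < (Finset.univ.filter (fun k : Fin n => μ k = j)).card :=
    Nat.pos_of_ne_zero hfreq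
  obtain ⟨k, hk⟩ := Finset.card_pos.mp hpos
  simp only [Finset.mem_filter, Finset.mem_univ, true_and] at hk
  simp only [Finset.coe_range, Set.mem_Iio]
  rw [← hk]
  exact h k

lemma freq_comp_perm_s18 (n : ℕ) (μ : Fin n → ℕ) (σ : Equiv.Perm (Fin n)) (j : ℕ) :
    (Finset.univ.filter (fun k : Fin n => μ (σ k) = j)).card = freq n μ j := by
  unfold freq
  apply Finset.card_equiv σ
  intro k
  simp

lemma card_stab (n N : ℕ) (f : Fin n → ℕ) (h : ∀ k, f k < N) :
    (Finset.univ.filter (fun σ : Equiv.Perm (Fin n) => ∀ k, f (σ k) = f k)).card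
      = ∏ j ∈ Finset.range N, Nat.factorial (freq n f j) := by
  have e1 : (Finset.univ.filter (fun σ : Equiv.Perm (Fin n) => ∀ k, f (σ k) = f k))
      = (Finset.univ.filter (fun σ : Equiv.Perm (Fin n) => f ∘ σ = f)) := by
    apply Finset.filter_congr
    intro σ _
    constructor
    · intro hσ; funext k; exact hσ k
    · intro hσ k; exact congrFun hσ k
  rw [e1, ← Fintype.card_subtype, DomMulAct.stabilizer_card' f]
  have hsub : Finset.univ.image f ⊆ Finset.range N := by
    intro j hj
    obtain ⟨k, _, rfl⟩ := Finset.mem_image.mp hj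
    exact Finset.mem_range.mpr (h k)
  calc ∏ j ∈ Finset.univ.image f, (Fintype.card {a : Fin n // f a = j}).factorial
      = ∏ j ∈ Finset.univ.image f, (freq n f j).factorial := by
        refine Finset.prod_congr rfl fun j _ => ?_
        rw [Fintype.card_subtype]; rfl
    _ = ∏ j ∈ Finset.range N, (freq n f j).factorial := by
        apply Finset.prod_subset hsub
        intro j _ hj
        have h0 : freq n f j = 0 := by
          unfold freq
          rw [Finset.card_eq_zero, Finset.filter_eq_empty_iff]
          intro k _
          exact fun hk => hj (Finset.mem_image.mpr ⟨k, Finset.mem_univ k, hk⟩)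
        rw [h0, Nat.factorial_zero]

lemma exists_perm_comp (n : ℕ) (f g : Fin n → ℕ) (hfreq : ∀ j, freq n f j = freq n g j) :
    ∃ σ : Equiv.Perm (Fin n), ∀ k, f (σ k) = g k := by
  have e : ∀ c : ℕ, {a : Fin n // g a = c} ≃ {b : Fin n // f b = c} := by
    intro c
    apply Fintype.equivOfCardEq
    rw [Fintype.card_subtype, Fintype.card_subtype]
    exact (hfreq c).symm
  exact ⟨Equiv.ofFiberEquiv e, fun k => Equiv.ofFiberEquiv_map e k⟩

lemma card_perm_comp (n N : ℕ) (f g : Fin n → ℕ) (hN : ∀ k, f k < N)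
    (hfreq : ∀ j, freq n f j = freq n g j) :
    (Finset.univ.filter (fun σ : Equiv.Perm (Fin n) => ∀ k, f (σ k) = g k)).card
      = ∏ j ∈ Finset.range N, Nat.factorial (freq n f j) := by
  obtain ⟨σ₀, hσ₀⟩ := exists_perm_comp n f g hfreq
  rw [← card_stab n N f hN]
  apply Finset.card_bij' (fun σ _ => σ * σ₀⁻¹) (fun π _ => π * σ₀)
  · intro σ hσ
    simp only [Finset.mem_filter, Finset.mem_univ, true_and] at hσ ⊢
    intro k
    rw [Equiv.Perm.mul_apply, hσ (σ₀⁻¹ k), ← hσ₀ (σ₀⁻¹ k), ← Equiv.Perm.mul_apply, mul_inv_cancel, Equiv.Perm.one_apply]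
  · intro π hπ
    simp only [Finset.mem_filter, Finset.mem_univ, true_and] at hπ ⊢
    intro k
    rw [Equiv.Perm.mul_apply, hπ (σ₀ k), hσ₀ k]
  · intro σ _; group
  · intro π _; group

lemma sum_eq_sum_freq (n N : ℕ) (μ : Fin n → ℕ) (h : ∀ k, μ k < N) :
    ∑ k, μ k = ∑ j ∈ Finset.range N, j * freq n μ j := by
  rw [← Finset.sum_fiberwise_of_maps_to (g := μ) (t := Finset.range N)
    (fun k _ => Finset.mem_range.mpr (h k)) μ]
  refine Finset.sum_congr rfl fun j _ => ?_
  have : ∀ k ∈ Finset.univ.filter (fun k : Fin n => μ k = j), μ k = j := by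
    intro k hk
    exact (Finset.mem_filter.mp hk).2
  rw [Finset.sum_congr rfl this, Finset.sum_const, smul_eq_mul, mul_comm]
  rfl

/-- If the frequencies of `β` and `α` differ by moving one part from `i` to `i+1`,
then each product of binomial coefficients is `(i+1)` or `0`. -/
lemma prod_choose_eq (n : ℕ) (α β : Fin n → ℕ) (i : ℕ)
    (h1 : freq n β i + 1 = freq n α i)
    (h2 : freq n β (i + 1) = freq n α (i + 1) + 1)
    (h3 : ∀ j, j ≠ i → j ≠ i + 1 → freq n β j = freq n α j)
    (hsum : ∑ k, β k = (∑ k, α k) + 1)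
    (σ : Equiv.Perm (Fin n)) :
    (∏ k, Nat.choose (β k) (α (σ k))) =
      if (∃ k₀, β k₀ = i + 1 ∧ α (σ k₀) = i ∧ ∀ k, k ≠ k₀ → α (σ k) = β k)
      then i + 1 else 0 := by
  by_cases hcond : ∃ k₀, β k₀ = i + 1 ∧ α (σ k₀) = i ∧ ∀ k, k ≠ k₀ → α (σ k) = β k
  · obtain ⟨k₀, hk1, hk2, hk3⟩ := hcond
    rw [if_pos ⟨k₀, hk1, hk2, hk3⟩]
    rw [Finset.prod_eq_single k₀ (fun b _ hb => by rw [hk3 b hb, Nat.choose_self])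
      (fun h => absurd (Finset.mem_univ k₀) h)]
    rw [hk1, hk2, Nat.choose_succ_self_right]
  · rw [if_neg hcond]
    by_cases hle : ∀ k, α (σ k) ≤ β k
    · exfalso
      apply hcond
      have hss : ∑ k, α (σ k) = ∑ k, α k := Equiv.sum_comp σ α
      have h' : ∑ k, ((β k - α (σ k)) + α (σ k)) = ∑ k, β k :=
        Finset.sum_congr rfl fun k _ => Nat.sub_add_cancel (hle k)
      rw [Finset.sum_add_distrib, hss, hsum] at h'
      have hD : ∑ k, (β k - α (σ k)) = 1 := by omega
      obtain ⟨k₀, -, hk₀⟩ := Finset.exists_ne_zero_of_sum_ne_zero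
        (f := fun k => β k - α (σ k)) (by rw [hD]; exact one_ne_zero)
      have hk₀' : β k₀ - α (σ k₀) ≠ 0 := hk₀
      have hsplit : (β k₀ - α (σ k₀)) + ∑ k ∈ Finset.univ.erase k₀, (β k - α (σ k))
          = ∑ k, (β k - α (σ k)) :=
        Finset.add_sum_erase Finset.univ (fun k => β k - α (σ k)) (Finset.mem_univ k₀)
      have h0 : ∑ k ∈ Finset.univ.erase k₀, (β k - α (σ k)) = 0 := by omega
      have hDk₀ : β k₀ - α (σ k₀) = 1 := by omega
      have hrest : ∀ k, k ≠ k₀ → β k - α (σ k) = 0 :=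
        fun k hk => (Finset.sum_eq_zero_iff.mp h0) k (by simp [hk])
      have hk₀1 : β k₀ = α (σ k₀) + 1 := by
        have := hle k₀; omega
      have heq : ∀ k, k ≠ k₀ → α (σ k) = β k := by
        intro k hk
        have := hle k; have := hrest k hk; omega
      set v := α (σ k₀) with hv
      have hfv : freq n β v + 1 = freq n α v := by
        have hA : (Finset.univ.filter (fun k : Fin n => α (σ k) = v)).card = freq n α v :=
          freq_comp_perm_s18 n α σ v
        have hBA : Finset.univ.filter (fun k : Fin n => β k = v)
            = (Finset.univ.filter (fun k : Fin n => α (σ k) = v)).erase k₀ := by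
          ext k
          simp only [Finset.mem_filter, Finset.mem_erase, Finset.mem_univ, true_and]
          constructor
          · intro hkv
            have hkk : k ≠ k₀ := by rintro rfl; omega
            exact ⟨hkk, by rw [heq k hkk]; exact hkv⟩
          · rintro ⟨hkk, hav⟩
            rw [← heq k hkk]; exact hav
        have hk₀mem : k₀ ∈ Finset.univ.filter (fun k : Fin n => α (σ k) = v) := by
          simp [hv.symm]
        have hpos : 0 < (Finset.univ.filter (fun k : Fin n => α (σ k) = v)).card :=
          Finset.card_pos.mpr ⟨k₀, hk₀mem⟩
        have hcard : freq n β v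
            = (Finset.univ.filter (fun k : Fin n => α (σ k) = v)).card - 1 := by
          unfold freq
          rw [hBA, Finset.card_erase_of_mem hk₀mem]
        omega
      have hvi : v = i := by
        by_contra hne
        rcases eq_or_ne v (i + 1) with hv2 | hne2
        · rw [hv2] at hfv; omega
        · have := h3 v hne hne2; omega
      exact ⟨k₀, by omega, by omega, heq⟩
    · push_neg at hle
      obtain ⟨k, hk⟩ := hle
      exact Finset.prod_eq_zero (Finset.mem_univ k) (Nat.choose_eq_zero_of_lt hk)

lemma freq_modify (n : ℕ) (β : Fin n → ℕ) (i : ℕ) (k₀ : Fin n) (hk₀ : β k₀ = i + 1) (j : ℕ) :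
    freq n (fun k => if k = k₀ then i else β k) j
      = if j = i then freq n β i + 1
        else if j = i + 1 then freq n β (i + 1) - 1 else freq n β j := by
  unfold freq
  by_cases hji : j = i
  · subst hji
    rw [if_pos rfl]
    have hset : Finset.univ.filter (fun k : Fin n => (if k = k₀ then j else β k) = j)
        = insert k₀ (Finset.univ.filter (fun k : Fin n => β k = j)) := by
      ext k
      simp only [Finset.mem_filter, Finset.mem_insert, Finset.mem_univ, true_and]
      by_cases hk : k = k₀
      · subst hk; simp
      · simp [hk]
    have hnm : k₀ ∉ Finset.univ.filter (fun k : Fin n => β k = j) := by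
      simp only [Finset.mem_filter, Finset.mem_univ, true_and]
      omega
    rw [hset, Finset.card_insert_of_notMem hnm]
  · rw [if_neg hji]
    by_cases hji1 : j = i + 1
    · subst hji1
      rw [if_pos rfl]
      have hset : Finset.univ.filter (fun k : Fin n => (if k = k₀ then i else β k) = i + 1)
          = (Finset.univ.filter (fun k : Fin n => β k = i + 1)).erase k₀ := by
        ext k
        simp only [Finset.mem_filter, Finset.mem_erase, Finset.mem_univ, true_and]
        by_cases hk : k = k₀
        · subst hk; simp
        · simp [hk]
      have hm : k₀ ∈ Finset.univ.filter (fun k : Fin n => β k = i + 1) := by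
        simp only [Finset.mem_filter, Finset.mem_univ, true_and]
        exact hk₀
      rw [hset, Finset.card_erase_of_mem hm]
    · rw [if_neg hji1]
      congr 1
      ext k
      simp only [Finset.mem_filter, Finset.mem_univ, true_and]
      by_cases hk : k = k₀
      · subst hk
        rw [if_pos rfl, hk₀]
        omega
      · simp [hk]

/-- the birth rate for the `Sₙ ⋉ T(n)` process: if `β` arises from `α` by
replacing a part `i` with `i+1`, then `(d_β/d_α)·B(β,α) = (i+1)·α[i]`. -/
theorem Bst_birth_rate (n : ℕ) (hn : 1 ≤ n) (α β : Fin n → ℕ) (i : ℕ)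
    (h1 : freq n β i + 1 = freq n α i)
    (h2 : freq n β (i + 1) = freq n α (i + 1) + 1)
    (h3 : ∀ j, j ≠ i → j ≠ i + 1 → freq n β j = freq n α j) :
    (dST n β / dST n α) * Bst n β α = ((i : ℝ) + 1) * (freq n α i : ℝ) := by
  set N : ℕ := i + 2 + (∑ k, α k) + (∑ k, β k) with hNdef
  have hαN : ∀ k, α k < N := by
    intro k
    have : α k ≤ ∑ k, α k :=
      Finset.single_le_sum (f := α) (fun _ _ => Nat.zero_le _) (Finset.mem_univ k)
    omega
  have hβN : ∀ k, β k < N := by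
    intro k
    have : β k ≤ ∑ k, β k :=
      Finset.single_le_sum (f := β) (fun _ _ => Nat.zero_le _) (Finset.mem_univ k)
    omega
  have hiN : i ∈ Finset.range N := Finset.mem_range.mpr (by omega)
  have hi1N : i + 1 ∈ (Finset.range N).erase i := by
    rw [Finset.mem_erase]
    exact ⟨by omega, Finset.mem_range.mpr (by omega)⟩
  set P := ∏ j ∈ Finset.range N, Nat.factorial (freq n α j) with hP
  set Q := ∏ j ∈ Finset.range N, Nat.factorial (freq n β j) with hQ
  have hPpos : 0 < P := Finset.prod_pos (fun j _ => Nat.factorial_pos _)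
  have hQpos : 0 < Q := Finset.prod_pos (fun j _ => Nat.factorial_pos _)
  -- the sums of α and β differ by 1
  have hsum : ∑ k, β k = (∑ k, α k) + 1 := by
    rw [sum_eq_sum_freq n N β hβN, sum_eq_sum_freq n N α hαN,
      ← Finset.add_sum_erase _ (fun j => j * freq n β j) hiN,
      ← Finset.add_sum_erase _ (fun j => j * freq n β j) hi1N,
      ← Finset.add_sum_erase _ (fun j => j * freq n α j) hiN,
      ← Finset.add_sum_erase _ (fun j => j * freq n α j) hi1N]
    have htail : ∑ j ∈ ((Finset.range N).erase i).erase (i + 1), j * freq n β j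
        = ∑ j ∈ ((Finset.range N).erase i).erase (i + 1), j * freq n α j := by
      refine Finset.sum_congr rfl fun j hj => ?_
      rw [Finset.mem_erase, Finset.mem_erase] at hj
      rw [h3 j hj.2.1 hj.1]
    rw [htail, ← h1, h2]
    ring
  -- the key factorial identity
  have hPQ : P * (freq n α (i + 1) + 1) = Q * freq n α i := by
    rw [hP, hQ,
      ← Finset.mul_prod_erase _ (fun j => Nat.factorial (freq n α j)) hiN,
      ← Finset.mul_prod_erase _ (fun j => Nat.factorial (freq n α j)) hi1N,
      ← Finset.mul_prod_erase _ (fun j => Nat.factorial (freq n β j)) hiN,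
      ← Finset.mul_prod_erase _ (fun j => Nat.factorial (freq n β j)) hi1N]
    have htail : ∏ j ∈ ((Finset.range N).erase i).erase (i + 1), Nat.factorial (freq n β j)
        = ∏ j ∈ ((Finset.range N).erase i).erase (i + 1), Nat.factorial (freq n α j) := by
      refine Finset.prod_congr rfl fun j hj => ?_
      rw [Finset.mem_erase, Finset.mem_erase] at hj
      rw [h3 j hj.2.1 hj.1]
    rw [htail, ← h1, h2, Nat.factorial_succ (freq n β i), Nat.factorial_succ (freq n α (i + 1))]
    ring
  -- the big sum, in ℕ
  have hnat : (∑ σ : Equiv.Perm (Fin n), ∏ k, Nat.choose (β k) (α (σ k)))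
      = (i + 1) * (freq n β (i + 1) * P) := by
    have hstep : ∀ σ : Equiv.Perm (Fin n), (∏ k, Nat.choose (β k) (α (σ k))) =
        if (∃ k₀, β k₀ = i + 1 ∧ α (σ k₀) = i ∧ ∀ k, k ≠ k₀ → α (σ k) = β k)
        then i + 1 else 0 := prod_choose_eq n α β i h1 h2 h3 hsum
    rw [Finset.sum_congr rfl (fun σ _ => hstep σ), ← Finset.sum_filter, Finset.sum_const,
      smul_eq_mul]
    have hbi : Finset.univ.filter (fun σ : Equiv.Perm (Fin n) =>
          ∃ k₀, β k₀ = i + 1 ∧ α (σ k₀) = i ∧ ∀ k, k ≠ k₀ → α (σ k) = β k)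
        = (Finset.univ.filter (fun k₀ : Fin n => β k₀ = i + 1)).biUnion
            (fun k₀ => Finset.univ.filter (fun σ : Equiv.Perm (Fin n) =>
              ∀ k, α (σ k) = if k = k₀ then i else β k)) := by
      ext σ
      simp only [Finset.mem_filter, Finset.mem_biUnion, Finset.mem_univ, true_and]
      constructor
      · rintro ⟨k₀, hb, ha, hrest⟩
        refine ⟨k₀, hb, fun k => ?_⟩
        by_cases hk : k = k₀
        · subst hk; simp [ha]
        · simp [hk, hrest k hk]
      · rintro ⟨k₀, hb, hall⟩
        refine ⟨k₀, hb, by simpa using hall k₀, fun k hk => by simpa [hk] using hall k⟩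
    rw [hbi, Finset.card_biUnion]
    · have hcards : ∀ k₀ ∈ Finset.univ.filter (fun k₀ : Fin n => β k₀ = i + 1),
          (Finset.univ.filter (fun σ : Equiv.Perm (Fin n) =>
            ∀ k, α (σ k) = if k = k₀ then i else β k)).card = P := by
        intro k₀ hk₀
        simp only [Finset.mem_filter, Finset.mem_univ, true_and] at hk₀
        apply card_perm_comp n N α _ hαN
        intro j
        rw [freq_modify n β i k₀ hk₀ j]
        split_ifs with hji hji1
        · subst hji; omega
        · subst hji1; omega
        · exact (h3 j hji hji1).symm
      rw [Finset.sum_congr rfl hcards, Finset.sum_const, smul_eq_mul]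
      have : (Finset.univ.filter (fun k₀ : Fin n => β k₀ = i + 1)).card = freq n β (i + 1) := rfl
      rw [this]
      ring
    · intro x hx y hy hxy
      simp only [Finset.mem_coe, Finset.mem_filter, Finset.mem_univ, true_and] at hx hy
      apply Finset.disjoint_left.mpr
      intro σ hσx hσy
      simp only [Finset.mem_filter, Finset.mem_univ, true_and] at hσx hσy
      have e1 := hσx x
      have e2 := hσy x
      rw [if_pos rfl] at e1
      rw [if_neg hxy] at e2
      omega
  -- convert the filtered real sum
  have hfil : (∑ σ ∈ Finset.univ.filter
        (fun σ : Equiv.Perm (Fin n) => ∀ k, α (σ k) ≤ β k),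
      ∏ k, ((Nat.choose (β k) (α (σ k))) : ℝ))
      = ∑ σ : Equiv.Perm (Fin n), ∏ k, ((Nat.choose (β k) (α (σ k))) : ℝ) := by
    apply Finset.sum_filter_of_ne
    intro σ _ hne k
    by_contra hlt
    apply hne
    refine Finset.prod_eq_zero (Finset.mem_univ k) ?_
    rw [Nat.choose_eq_zero_of_lt (by omega)]
    exact Nat.cast_zero
  have hsumR : (∑ σ ∈ Finset.univ.filter
        (fun σ : Equiv.Perm (Fin n) => ∀ k, α (σ k) ≤ β k),
      ∏ k, ((Nat.choose (β k) (α (σ k))) : ℝ))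
      = (((i + 1) * (freq n β (i + 1) * P) : ℕ) : ℝ) := by
    rw [hfil, ← hnat]
    push_cast
    rfl
  -- final assembly
  rw [dST, dST, Bst, finprod_freq_eq n N α hαN, finprod_freq_eq n N β hβN, ← hP, ← hQ, hsumR]
  have hkey : (i + 1) * (freq n β (i + 1) * P) = (i + 1) * (freq n α i) * Q := by
    rw [h2, mul_comm (freq n α (i + 1) + 1) P] at *
    rw [hPQ]
    ring
  rw [hkey]
  have hP0 : (P : ℝ) ≠ 0 := Nat.cast_ne_zero.mpr (by omega)
  have hQ0 : (Q : ℝ) ≠ 0 := Nat.cast_ne_zero.mpr (by omega)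
  have hn0 : ((Nat.factorial n : ℕ) : ℝ) ≠ 0 := Nat.cast_ne_zero.mpr (Nat.factorial_ne_zero n)
  push_cast
  field_simp
end

section
/- Let n ≥ 1 and k ≥ 0 be integers and let f : ℝ^{2n} → ℝ be f(x) = exp(−‖x‖²). Then the k-th iterated Laplacian of f satisfies Δ^k f(x) = (−4)^k · k! · L_k^{(n−1)}(‖x‖²) · exp(−‖x‖²) for all x ∈ ℝ^{2n}, where L_k^{(n−1)}(u) = ∑_{i=0}^{k} (−1)^i · binom(k+n−1, k−i) · u^i / i! is the generalized Laguerre polynomial of degree k and order n−1, and Δ g = ∑_{j=1}^{2n} ∂²g/∂x_j² is the Euclidean Laplacian. -/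
open Polynomial

/-- The Euclidean Laplacian `Δg = ∑_j ∂²g/∂x_j²` of a function on `ℝᵐ` (coordinates realized
as `Fin m → ℝ`). -/
noncomputable def euclLaplacian {m : ℕ} (g : (Fin m → ℝ) → ℝ) : (Fin m → ℝ) → ℝ :=
  fun x => ∑ j, fderiv ℝ (fun y => fderiv ℝ g y (Pi.single j 1)) x (Pi.single j 1)


/-- The generalized Laguerre polynomial `L_k^{(n-1)}(u) = ∑_{i=0}^k (-1)^i C(k+n-1,k-i) u^i/i!`. -/
noncomputable def laguerre (n k : ℕ) (u : ℝ) : ℝ :=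
  ∑ i ∈ Finset.range (k + 1),
    (-1 : ℝ) ^ i * (Nat.choose (k + n - 1) (k - i) : ℝ) * u ^ i / (Nat.factorial i : ℝ)

namespace IterLap

variable {m : ℕ}

/-- squared norm -/
def S (m : ℕ) (y : Fin m → ℝ) : ℝ := ∑ j, y j ^ 2

noncomputable def dS (y : Fin m → ℝ) : (Fin m → ℝ) →L[ℝ] ℝ :=
  ∑ j, (2 * y j) • (ContinuousLinearMap.proj j : (Fin m → ℝ) →L[ℝ] ℝ)

lemma hasFDerivAt_S (y : Fin m → ℝ) : HasFDerivAt (S m) (dS y) y := by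
  apply HasFDerivAt.fun_sum
  intro j _
  have h1 : HasDerivAt (fun t : ℝ => t ^ 2) (2 * y j) (y j) := by
    simpa using (hasDerivAt_pow 2 (y j))
  have h2 : HasFDerivAt (fun z : Fin m → ℝ => z j)
      (ContinuousLinearMap.proj j : (Fin m → ℝ) →L[ℝ] ℝ) y :=
    (ContinuousLinearMap.proj (R := ℝ) (φ := fun _ : Fin m => ℝ) j).hasFDerivAt
  exact h1.comp_hasFDerivAt y h2

lemma dS_apply (y : Fin m → ℝ) (j : Fin m) : dS y (Pi.single j 1) = 2 * y j := by
  simp only [dS, ContinuousLinearMap.sum_apply, ContinuousLinearMap.smul_apply,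
    ContinuousLinearMap.proj_apply, smul_eq_mul]
  rw [Finset.sum_eq_single j]
  · simp
  · intro b _ hb; simp [Pi.single_eq_of_ne hb]
  · simp

/-- derivative-minus-identity operator on polynomials -/
noncomputable def DP (P : ℝ[X]) : ℝ[X] := derivative P - P

/-- the Gaussian-times-polynomial function -/
noncomputable def G (m : ℕ) (P : ℝ[X]) : (Fin m → ℝ) → ℝ :=
  fun y => P.eval (S m y) * Real.exp (-(S m y))

lemma hasDerivAt_F (P : ℝ[X]) (u : ℝ) :
    HasDerivAt (fun t => P.eval t * Real.exp (-t)) ((DP P).eval u * Real.exp (-u)) u := by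
  have h1 : HasDerivAt (fun t : ℝ => P.eval t) (P.derivative.eval u) u := P.hasDerivAt u
  have h2 : HasDerivAt (fun t : ℝ => Real.exp (-t)) (-Real.exp (-u)) u := by
    simpa using ((hasDerivAt_neg u).exp)
  have := h1.fun_mul h2
  refine this.congr_deriv ?_
  simp [DP]; ring

lemma hasFDerivAt_G (P : ℝ[X]) (y : Fin m → ℝ) :
    HasFDerivAt (G m P) (((DP P).eval (S m y) * Real.exp (-(S m y))) • dS y) y :=
  (hasDerivAt_F P (S m y)).comp_hasFDerivAt y (hasFDerivAt_S y)

lemma fderiv_G_apply (P : ℝ[X]) (y : Fin m → ℝ) (j : Fin m) :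
    fderiv ℝ (G m P) y (Pi.single j 1) = G m (DP P) y * (2 * y j) := by
  rw [(hasFDerivAt_G P y).fderiv]
  simp [dS_apply, G]

noncomputable def TT (m : ℕ) (P : ℝ[X]) : ℝ[X] := C 4 * X * DP (DP P) + C (2 * (m:ℝ)) * DP P

lemma lap_G (P : ℝ[X]) (x : Fin m → ℝ) :
    euclLaplacian (G m P) x = G m (TT m P) x := by
  unfold euclLaplacian
  have key : ∀ j : Fin m,
      fderiv ℝ (fun y => fderiv ℝ (G m P) y (Pi.single j 1)) x (Pi.single j 1)
        = G m (DP (DP P)) x * (2 * x j) * (2 * x j) + G m (DP P) x * 2 := by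
    intro j
    have heq : (fun y => fderiv ℝ (G m P) y (Pi.single j 1))
        = fun y => G m (DP P) y * (2 * y j) := by
      funext y; exact fderiv_G_apply P y j
    rw [heq]
    have h1 : HasFDerivAt (G m (DP P))
        (((DP (DP P)).eval (S m x) * Real.exp (-(S m x))) • dS x) x := hasFDerivAt_G _ x
    have h2 : HasFDerivAt (fun y : Fin m → ℝ => 2 * y j)
        ((2 : ℝ) • (ContinuousLinearMap.proj j : (Fin m → ℝ) →L[ℝ] ℝ)) x := by
      exact ((ContinuousLinearMap.proj (R := ℝ) (φ := fun _ : Fin m => ℝ) j).hasFDerivAt).const_mul 2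
    have h3 := (h1.fun_mul h2).fderiv
    rw [h3]
    simp only [ContinuousLinearMap.add_apply, ContinuousLinearMap.smul_apply, dS_apply,
      ContinuousLinearMap.proj_apply, smul_eq_mul, Pi.single_eq_same]
    simp [G]; ring
  rw [Finset.sum_congr rfl (fun j _ => key j)]
  rw [Finset.sum_add_distrib]
  simp only [Finset.sum_const, Finset.card_univ, Fintype.card_fin, nsmul_eq_mul]
  have hsum : ∑ j : Fin m, G m (DP (DP P)) x * (2 * x j) * (2 * x j)
      = 4 * S m x * G m (DP (DP P)) x := by
    have h : ∀ j : Fin m, G m (DP (DP P)) x * (2 * x j) * (2 * x j)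
        = (4 * G m (DP (DP P)) x) * x j ^ 2 := by intro j; ring
    rw [Finset.sum_congr rfl (fun j _ => h j), ← Finset.mul_sum]
    simp only [S]; ring
  rw [hsum]
  show _ = (C 4 * X * DP (DP P) + C (2 * (m:ℝ)) * DP P).eval (S m x) * Real.exp (-(S m x))
  simp only [eval_add, eval_mul, eval_C, eval_X, G]
  ring


lemma fne (t : ℕ) : (Nat.factorial t : ℝ) ≠ 0 :=
  Nat.cast_ne_zero.mpr (Nat.factorial_ne_zero t)

/-- coefficients of `(-4)^k k! L_k^{(n-1)}` -/
noncomputable def coefQ (n k i : ℕ) : ℝ :=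
  if i ≤ k then (-4 : ℝ)^k * (Nat.factorial k : ℝ) * (-1)^i *
    (Nat.choose (k + n - 1) (k - i) : ℝ) / (Nat.factorial i : ℝ) else 0

noncomputable def Q (n k : ℕ) : ℝ[X] :=
  ∑ i ∈ Finset.range (k + 1), C (coefQ n k i) * X ^ i

lemma coeff_Q (n k i : ℕ) : (Q n k).coeff i = coefQ n k i := by
  rw [Q, finset_sum_coeff]
  simp only [coeff_C_mul, coeff_X_pow]
  by_cases h : i ≤ k
  · rw [Finset.sum_eq_single i]
    · simp
    · intro b _ hb; simp [Ne.symm hb]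
    · intro hi; exact absurd (Finset.mem_range.mpr (by omega)) hi
  · rw [Finset.sum_eq_zero, coefQ, if_neg h]
    intro b hb
    have : b ≠ i := by rw [Finset.mem_range] at hb; omega
    simp [Ne.symm this]

lemma key0 (n k : ℕ) (hn : 1 ≤ n) :
    coefQ n (k+1) 0 = 4*(n:ℝ)*coefQ n k 1 - 4*(n:ℝ)*coefQ n k 0 := by
  obtain ⟨e, rfl⟩ : ∃ e, n = e + 1 := ⟨n - 1, by omega⟩
  rcases Nat.eq_zero_or_pos k with rfl | hk
  · simp only [coefQ]
    norm_num
  · obtain ⟨d, rfl⟩ : ∃ d, k = d + 1 := ⟨k - 1, by omega⟩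
    simp only [coefQ, if_pos (by omega : (0:ℕ) ≤ d+1+1), if_pos (by omega : (1:ℕ) ≤ d+1),
      if_pos (by omega : (0:ℕ) ≤ d+1)]
    have e1 : d + 1 + 1 + (e + 1) - 1 = d + e + 2 := by omega
    have e2 : d + 1 + 1 - 0 = d + 2 := by omega
    have e3 : d + 1 + (e + 1) - 1 = d + e + 1 := by omega
    have e4 : d + 1 - 1 = d := by omega
    have e5 : d + 1 - 0 = d + 1 := by omega
    rw [e1, e2, e3, e4, e5]
    rw [Nat.cast_choose ℝ (show d + 2 ≤ d + e + 2 by omega),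
        Nat.cast_choose ℝ (show d ≤ d + e + 1 by omega),
        Nat.cast_choose ℝ (show d + 1 ≤ d + e + 1 by omega)]
    have s1 : d + e + 2 - (d + 2) = e := by omega
    have s2 : d + e + 1 - d = e + 1 := by omega
    have s3 : d + e + 1 - (d + 1) = e := by omega
    rw [s1, s2, s3]
    have f1 : ((d+e+2).factorial : ℝ) = (d+e+2) * (d+e+1).factorial := by
      rw [show d+e+2 = (d+e+1)+1 from rfl, Nat.factorial_succ]; push_cast; ring
    have f2 : ((d+2).factorial : ℝ) = (d+2) * (d+1) * d.factorial := by
      rw [show d+2 = (d+1)+1 from rfl, Nat.factorial_succ, Nat.factorial_succ]; push_cast; ring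
    have f3 : ((d+1).factorial : ℝ) = (d+1) * d.factorial := by
      rw [Nat.factorial_succ]; push_cast; ring
    have f4 : ((e+1).factorial : ℝ) = (e+1) * e.factorial := by
      rw [Nat.factorial_succ]; push_cast; ring
    rw [f1, f2, f4, f3]
    field_simp
    push_cast
    ring

lemma keyS (n k j : ℕ) (hn : 1 ≤ n) :
    coefQ n (k+1) (j+1)
      = (4*((j:ℝ)+1)*((j:ℝ)+2) + 4*(n:ℝ)*((j:ℝ)+2)) * coefQ n k (j+2)
        - (8*((j:ℝ)+1) + 4*(n:ℝ)) * coefQ n k (j+1) + 4 * coefQ n k j := by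
  obtain ⟨e, rfl⟩ : ∃ e, n = e + 1 := ⟨n - 1, by omega⟩
  rcases lt_trichotomy k (j+1) with hk | rfl | hk
  · -- j ≥ k : either j = k (i.e. k = j) covered? k < j+1 means k ≤ j
    rcases Nat.lt_or_ge j (k+1) with hj | hj
    · -- k ≤ j and j < k+1 so j = k : case i = k+1
      have : j = k := by omega
      subst this
      simp only [coefQ, if_pos (le_refl (j+1)), if_neg (by omega : ¬ j+2 ≤ j),
        if_neg (by omega : ¬ j+1 ≤ j), if_pos (le_refl j)]
      have e1 : j + 1 + (e + 1) - 1 = j + e + 1 := by omega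
      have e2 : j + 1 - (j + 1) = 0 := by omega
      have e3 : j + (e + 1) - 1 = j + e := by omega
      have e4 : j - j = 0 := by omega
      rw [e1, e2, e3, e4, Nat.choose_zero_right, Nat.choose_zero_right]
      have f1 : ((j+1).factorial : ℝ) = (j+1) * j.factorial := by
        rw [Nat.factorial_succ]; push_cast; ring
      rw [f1]
      field_simp
      ring
    · -- j ≥ k+1 : everything vanishes
      simp only [coefQ, if_neg (by omega : ¬ j+1 ≤ k+1), if_neg (by omega : ¬ j+2 ≤ k),
        if_neg (by omega : ¬ j+1 ≤ k), if_neg (by omega : ¬ j ≤ k)]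
      ring
  · -- k = j+1 : case i = k
    simp only [coefQ, if_pos (by omega : j+1 ≤ j+1+1), if_neg (by omega : ¬ j+2 ≤ j+1),
      if_pos (by omega : j+1 ≤ j+1), if_pos (by omega : j ≤ j+1)]
    have e1 : j + 1 + 1 + (e + 1) - 1 = j + e + 2 := by omega
    have e2 : j + 1 + 1 - (j + 1) = 1 := by omega
    have e3 : j + 1 + (e + 1) - 1 = j + e + 1 := by omega
    have e4 : j + 1 - (j + 1) = 0 := by omega
    have e5 : j + 1 - j = 1 := by omega
    rw [e1, e2, e3, e4, e5, Nat.choose_zero_right, Nat.choose_one_right,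
      Nat.choose_one_right]
    have f1 : ((j+1).factorial : ℝ) = (j+1) * j.factorial := by
      rw [Nat.factorial_succ]; push_cast; ring
    have f2 : ((j+1+1).factorial : ℝ) = (j+2) * (j+1) * j.factorial := by
      rw [show j+1+1 = (j+1)+1 from rfl, Nat.factorial_succ, Nat.factorial_succ]
      push_cast; ring
    rw [f1, f2]
    field_simp
    push_cast
    ring
  · -- j + 2 ≤ k : generic case
    obtain ⟨d, rfl⟩ : ∃ d, k = j + 2 + d := ⟨k - (j+2), by omega⟩
    simp only [coefQ, if_pos (by omega : j+1 ≤ j+2+d+1), if_pos (by omega : j+2 ≤ j+2+d),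
      if_pos (by omega : j+1 ≤ j+2+d), if_pos (by omega : j ≤ j+2+d)]
    have e1 : j + 2 + d + 1 + (e + 1) - 1 = j + d + e + 3 := by omega
    have e2 : j + 2 + d + 1 - (j + 1) = d + 2 := by omega
    have e3 : j + 2 + d + (e + 1) - 1 = j + d + e + 2 := by omega
    have e4 : j + 2 + d - (j + 2) = d := by omega
    have e5 : j + 2 + d - (j + 1) = d + 1 := by omega
    have e6 : j + 2 + d - j = d + 2 := by omega
    rw [e1, e2, e3, e4, e5, e6]
    rw [Nat.cast_choose ℝ (show d + 2 ≤ j + d + e + 3 by omega),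
        Nat.cast_choose ℝ (show d ≤ j + d + e + 2 by omega),
        Nat.cast_choose ℝ (show d + 1 ≤ j + d + e + 2 by omega),
        Nat.cast_choose ℝ (show d + 2 ≤ j + d + e + 2 by omega)]
    have s1 : j + d + e + 3 - (d + 2) = j + e + 1 := by omega
    have s2 : j + d + e + 2 - d = j + e + 2 := by omega
    have s3 : j + d + e + 2 - (d + 1) = j + e + 1 := by omega
    have s4 : j + d + e + 2 - (d + 2) = j + e := by omega
    rw [s1, s2, s3, s4]
    have f1 : ((j+d+e+3).factorial : ℝ) = (j+d+e+3) * (j+d+e+2).factorial := by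
      rw [show j+d+e+3 = (j+d+e+2)+1 from rfl, Nat.factorial_succ]; push_cast; ring
    have f2 : ((d+2).factorial : ℝ) = (d+2) * (d+1) * d.factorial := by
      rw [show d+2 = (d+1)+1 from rfl, Nat.factorial_succ, Nat.factorial_succ]; push_cast; ring
    have f3 : ((d+1).factorial : ℝ) = (d+1) * d.factorial := by
      rw [Nat.factorial_succ]; push_cast; ring
    have f4 : ((j+e+2).factorial : ℝ) = (j+e+2) * (j+e+1) * (j+e).factorial := by
      rw [show j+e+2 = (j+e+1)+1 from rfl, Nat.factorial_succ, Nat.factorial_succ]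
      push_cast; ring
    have f5 : ((j+e+1).factorial : ℝ) = (j+e+1) * (j+e).factorial := by
      rw [Nat.factorial_succ]; push_cast; ring
    have f6 : ((j+2).factorial : ℝ) = (j+2) * (j+1) * j.factorial := by
      rw [show j+2 = (j+1)+1 from rfl, Nat.factorial_succ, Nat.factorial_succ]; push_cast; ring
    have f7 : ((j+1).factorial : ℝ) = (j+1) * j.factorial := by
      rw [Nat.factorial_succ]; push_cast; ring
    have f8 : ((j+2+d+1).factorial : ℝ) = (j+d+3) * (j+2+d).factorial := by
      rw [Nat.factorial_succ]; push_cast; ring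
    rw [f1, f2, f4, f6, f8, f3, f5, f7]
    field_simp
    push_cast
    ring


lemma coeff_DP (P : ℝ[X]) (t : ℕ) :
    (DP P).coeff t = P.coeff (t+1) * ((t:ℝ)+1) - P.coeff t := by
  simp [DP, coeff_derivative]

lemma TT_Q (n k : ℕ) (hn : 1 ≤ n) : TT (2*n) (Q n k) = Q n (k+1) := by
  ext i
  rw [coeff_Q]
  rcases i with _ | j
  · rw [TT, coeff_add, mul_assoc, coeff_C_mul, mul_coeff_zero, coeff_X_zero, zero_mul,
      mul_zero, zero_add, coeff_C_mul]
    simp only [coeff_DP, coeff_Q]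
    rw [key0 n k hn]
    push_cast
    ring
  · rw [TT, coeff_add, mul_assoc, coeff_C_mul, coeff_X_mul, coeff_C_mul]
    simp only [coeff_DP, coeff_Q]
    rw [keyS n k j hn]
    push_cast
    ring

lemma Q_zero (n : ℕ) : Q n 0 = 1 := by
  have : coefQ n 0 0 = 1 := by simp [coefQ]
  simp [Q, this]

lemma iter_G (n : ℕ) (hn : 1 ≤ n) (k : ℕ) :
    euclLaplacian^[k] (G (2*n) 1) = G (2*n) (Q n k) := by
  induction k with
  | zero => rw [Function.iterate_zero_apply, Q_zero]
  | succ k ih =>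
    rw [Function.iterate_succ_apply', ih, show euclLaplacian (G (2*n) (Q n k))
      = G (2*n) (TT (2*n) (Q n k)) from funext (lap_G _), TT_Q n k hn]

end IterLap

/-- the `k`-th iterated Laplacian of the Gaussian `exp(-‖x‖²)` on `ℝ^{2n}`. -/
theorem iteratedLaplacian_gaussian (n k : ℕ) (hn : 1 ≤ n) (x : Fin (2 * n) → ℝ) :
    (euclLaplacian^[k] (fun y : Fin (2 * n) → ℝ => Real.exp (-(∑ j, y j ^ 2)))) x
      = (-4 : ℝ) ^ k * (Nat.factorial k : ℝ) * laguerre n k (∑ j, x j ^ 2) *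
          Real.exp (-(∑ j, x j ^ 2)) := by
  have h1 : (fun y : Fin (2 * n) → ℝ => Real.exp (-(∑ j, y j ^ 2)))
      = IterLap.G (2*n) 1 := by
    funext y; simp [IterLap.G, IterLap.S]
  rw [h1, IterLap.iter_G n hn k]
  have heval : (IterLap.Q n k).eval (IterLap.S (2*n) x)
      = (-4 : ℝ) ^ k * (Nat.factorial k : ℝ) * laguerre n k (IterLap.S (2*n) x) := by
    rw [IterLap.Q, Polynomial.eval_finset_sum, laguerre, Finset.mul_sum]
    apply Finset.sum_congr rfl
    intro i hi
    rw [Polynomial.eval_mul, Polynomial.eval_C, Polynomial.eval_pow, Polynomial.eval_X,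
      IterLap.coefQ, if_pos (by exact Nat.lt_succ_iff.mp (Finset.mem_range.mp hi))]
    ring
  show (IterLap.Q n k).eval (IterLap.S (2*n) x) * Real.exp (-(IterLap.S (2*n) x)) = _
  rw [heval]
  rfl
end
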